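/- arXiv:1704.05814 — 11 statements merged into one kernel-verified Lean document; each statement's English description precedes it below -/
import Mathlib

section
/- For all natural numbers a, b one has {tr(X^a), tr(X^b)} = 0 in 𝒪ₙ; that is, the traces of powers of X pairwise commute under the quasi-Poisson bracket induced on the representation space of the tadpole quiver. -/
open Matrix Finset

/-- The polynomial ring `𝒪ₙ = ℂ[X_{ij}, Z_{ij}]` in the entries of two `n × n` matrices. -/
noncomputable abbrev Oring (n : ℕ) : Type :=
  MvPolynomial ((Fin n × Fin n) ⊕ (Fin n × Fin n)) ℂ

/-- The matrix `X` with polynomial entries `X_{ij}`. -/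
noncomputable def Xm (n : ℕ) : Matrix (Fin n) (Fin n) (Oring n) :=
  Matrix.of fun i j => MvPolynomial.X (Sum.inl (i, j))

/-- The matrix `Z` with polynomial entries `Z_{ij}`. -/
noncomputable def Zm (n : ℕ) : Matrix (Fin n) (Fin n) (Oring n) :=
  Matrix.of fun i j => MvPolynomial.X (Sum.inr (i, j))

/-- Kronecker delta in `𝒪ₙ`. -/
noncomputable def kd (n : ℕ) (i j : Fin n) : Oring n := if i = j then 1 else 0

/-- the traces of powers of `X` pairwise commute under the (unique)
antisymmetric biderivation with the prescribed values on generators. -/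
theorem trace_pow_X_bracket_trace_pow_X (n : ℕ) (hn : 1 ≤ n)
    (br : Oring n → Oring n → Oring n)
    (hadd : ∀ f g h : Oring n, br f (g + h) = br f g + br f h)
    (hsmul : ∀ (c : ℂ) (f g : Oring n), br f (c • g) = c • br f g)
    (hleib : ∀ f g h : Oring n, br f (g * h) = br f g * h + g * br f h)
    (hanti : ∀ f g : Oring n, br f g = - br g f)
    (hXX : ∀ i j u v : Fin n,
      br (Xm n i j) (Xm n u v) =
        (2⁻¹ : ℂ) • ((Xm n ^ 2) u j * kd n i v) - (2⁻¹ : ℂ) • (kd n u j * (Xm n ^ 2) i v))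
    (hZZ : ∀ i j u v : Fin n,
      br (Zm n i j) (Zm n u v) =
        (2⁻¹ : ℂ) • (kd n u j * (Zm n ^ 2) i v) - (2⁻¹ : ℂ) • ((Zm n ^ 2) u j * kd n i v))
    (hXZ : ∀ i j u v : Fin n,
      br (Xm n i j) (Zm n u v) =
        (2⁻¹ : ℂ) • ((Zm n * Xm n) u j * kd n i v)
          + (2⁻¹ : ℂ) • (kd n u j * (Xm n * Zm n) i v)
          + (2⁻¹ : ℂ) • (Zm n u j * Xm n i v)
          - (2⁻¹ : ℂ) • (Xm n u j * Zm n i v))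
    (a b : ℕ) :
    br (Matrix.trace (Xm n ^ a)) (Matrix.trace (Xm n ^ b)) = 0 := by
  -- basic derived facts
  have hzero : ∀ f : Oring n, br f 0 = 0 := by
    intro f
    have := hsmul 0 f 0
    simpa using this
  have hone : ∀ f : Oring n, br f 1 = 0 := by
    intro f
    have h := hleib f 1 1
    simp only [mul_one, one_mul] at h
    exact (right_eq_add.mp h)
  have hsum : ∀ (f : Oring n) (s : Finset (Fin n)) (g : Fin n → Oring n),
      br f (∑ p ∈ s, g p) = ∑ p ∈ s, br f (g p) := by
    intro f s g
    induction s using Finset.induction with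
    | empty => simpa using hzero f
    | insert x s h ih => rw [Finset.sum_insert h, hadd, ih, Finset.sum_insert h]
  -- closed form for br (X i j) ((X^b) u v)
  have hF : ∀ (b : ℕ) (i j u v : Fin n),
      br (Xm n i j) ((Xm n ^ b) u v) =
        (2⁻¹ : ℂ) • ((Xm n ^ b) u j * Xm n i v)
          + (2⁻¹ : ℂ) • ((Xm n ^ (b + 1)) u j * kd n i v)
          - (2⁻¹ : ℂ) • (kd n u j * (Xm n ^ (b + 1)) i v)
          - (2⁻¹ : ℂ) • (Xm n u j * (Xm n ^ b) i v) := by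
    intro b
    induction b with
    | zero =>
      intro i j u v
      simp only [pow_zero, Matrix.one_apply, zero_add, pow_one, kd]
      rw [show br (Xm n i j) (if u = v then (1 : Oring n) else 0) = 0 by
        split
        · exact hone _
        · exact hzero _]
      abel
    | succ b ih =>
      intro i j u v
      set c : Oring n := MvPolynomial.C (2⁻¹ : ℂ) with hc
      have e1 : (Xm n ^ (b + 1)) u v = ∑ p, (Xm n ^ b) u p * Xm n p v := by
        rw [pow_succ, Matrix.mul_apply]
      rw [e1, hsum]
      have expand : ∀ p ∈ (Finset.univ : Finset (Fin n)),
          br (Xm n i j) ((Xm n ^ b) u p * Xm n p v) =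
            c * ((Xm n ^ b) u j * (Xm n i p * Xm n p v))
            + c * ((Xm n ^ (b + 1)) u j * (kd n i p * Xm n p v))
            - c * (kd n u j * ((Xm n ^ (b + 1)) i p * Xm n p v))
            - c * (Xm n u j * ((Xm n ^ b) i p * Xm n p v))
            + c * (((Xm n ^ b) u p * (Xm n ^ 2) p j) * kd n i v)
            - c * (((Xm n ^ b) u p * kd n p j) * (Xm n ^ 2) i v) := by
        intro p _
        rw [hleib, ih, hXX]
        simp only [MvPolynomial.smul_eq_C_mul, ← hc]
        ring
      rw [Finset.sum_congr rfl expand]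
      have s1 : ∑ p, (Xm n i p * Xm n p v) = (Xm n ^ 2) i v := by
        rw [pow_two, Matrix.mul_apply]
      have s2 : ∑ p, (kd n i p * Xm n p v) = Xm n i v := by
        simp [kd, ite_mul]
      have s3 : ∑ p, ((Xm n ^ (b + 1)) i p * Xm n p v) = (Xm n ^ (b + 2)) i v := by
        rw [show Xm n ^ (b + 2) = Xm n ^ (b + 1) * Xm n from pow_succ _ _, Matrix.mul_apply]
      have s4 : ∑ p, ((Xm n ^ b) i p * Xm n p v) = (Xm n ^ (b + 1)) i v := by
        rw [pow_succ, Matrix.mul_apply]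
      have s5 : ∑ p, ((Xm n ^ b) u p * (Xm n ^ 2) p j) = (Xm n ^ (b + 2)) u j := by
        rw [pow_add, Matrix.mul_apply]
      have s6 : ∑ p, ((Xm n ^ b) u p * kd n p j) = (Xm n ^ b) u j := by
        simp [kd, mul_ite]
      simp only [Finset.sum_add_distrib, Finset.sum_sub_distrib, ← Finset.mul_sum,
        ← Finset.sum_mul]
      rw [s1, s2, s3, s4, s5, s6]
      simp only [MvPolynomial.smul_eq_C_mul, ← hc]
      ring
  -- bracket of a generator entry with a trace of a power vanishes
  have htr : ∀ (b : ℕ) (i j : Fin n), br (Xm n i j) (Matrix.trace (Xm n ^ b)) = 0 := by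
    intro b i j
    rw [show Matrix.trace (Xm n ^ b) = ∑ u, (Xm n ^ b) u u from rfl, hsum]
    have expand : ∀ u ∈ (Finset.univ : Finset (Fin n)),
        br (Xm n i j) ((Xm n ^ b) u u) =
          (2⁻¹ : ℂ) • ((Xm n ^ b) u j * Xm n i u)
            + (2⁻¹ : ℂ) • ((Xm n ^ (b + 1)) u j * kd n i u)
            - (2⁻¹ : ℂ) • (kd n u j * (Xm n ^ (b + 1)) i u)
            - (2⁻¹ : ℂ) • (Xm n u j * (Xm n ^ b) i u) := fun u _ => hF b i j u u
    rw [Finset.sum_congr rfl expand]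
    have t1 : ∑ u, ((Xm n ^ b) u j * Xm n i u) = (Xm n ^ (b + 1)) i j := by
      rw [pow_succ', Matrix.mul_apply]
      exact Finset.sum_congr rfl fun u _ => mul_comm _ _
    have t2 : ∑ u, ((Xm n ^ (b + 1)) u j * kd n i u) = (Xm n ^ (b + 1)) i j := by
      simp [kd, mul_ite, eq_comm]
    have t3 : ∑ u, (kd n u j * (Xm n ^ (b + 1)) i u) = (Xm n ^ (b + 1)) i j := by
      simp [kd, ite_mul]
    have t4 : ∑ u, (Xm n u j * (Xm n ^ b) i u) = (Xm n ^ (b + 1)) i j := by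
      rw [pow_succ, Matrix.mul_apply]
      exact Finset.sum_congr rfl fun u _ => mul_comm _ _
    simp only [Finset.sum_add_distrib, Finset.sum_sub_distrib, ← Finset.smul_sum]
    rw [t1, t2, t3, t4]
    abel
  -- derivation rules in the first argument
  have hadd' : ∀ f g h : Oring n, br (f + g) h = br f h + br g h := by
    intro f g h
    rw [hanti, hadd, hanti f, hanti g]
    ring
  have hleib' : ∀ f g h : Oring n, br (f * g) h = br f h * g + f * br g h := by
    intro f g h
    rw [hanti, hleib, hanti f, hanti g]
    ring
  have hzero' : ∀ h : Oring n, br 0 h = 0 := by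
    intro h
    rw [hanti, hzero, neg_zero]
  have hone' : ∀ h : Oring n, br 1 h = 0 := by
    intro h
    rw [hanti, hone, neg_zero]
  have hsum' : ∀ (h : Oring n) (s : Finset (Fin n)) (g : Fin n → Oring n),
      br (∑ p ∈ s, g p) h = ∑ p ∈ s, br (g p) h := by
    intro h s g
    rw [hanti, hsum]
    rw [← Finset.sum_neg_distrib]
    exact Finset.sum_congr rfl fun p _ => (hanti (g p) h).symm
  -- bracket of any entry of X^a with the trace vanishes
  have hG : ∀ (a : ℕ) (u v : Fin n) (b : ℕ),
      br ((Xm n ^ a) u v) (Matrix.trace (Xm n ^ b)) = 0 := by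
    intro a
    induction a with
    | zero =>
      intro u v b
      simp only [pow_zero, Matrix.one_apply]
      split
      · exact hone' _
      · exact hzero' _
    | succ a ih =>
      intro u v b
      have e1 : (Xm n ^ (a + 1)) u v = ∑ p, (Xm n ^ a) u p * Xm n p v := by
        rw [pow_succ, Matrix.mul_apply]
      rw [e1, hsum']
      refine Finset.sum_eq_zero fun p _ => ?_
      rw [hleib', ih, htr, zero_mul, mul_zero, add_zero]
  -- conclusion
  rw [show Matrix.trace (Xm n ^ a) = ∑ u, (Xm n ^ a) u u from rfl, hsum']
  exact Finset.sum_eq_zero fun u _ => hG a u u b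
end

section
/- For all natural numbers a, b one has {tr(Z^a), tr(Z^b)} = 0 in 𝒪ₙ; that is, the traces of powers of Z (the Ruijsenaars–Schneider Hamiltonians) pairwise commute under the quasi-Poisson bracket induced on the representation space of the tadpole quiver. -/
open Matrix Finset

section Aux
variable {n : ℕ} (br : Oring n → Oring n → Oring n)
  (hadd : ∀ f g h : Oring n, br f (g + h) = br f g + br f h)
  (hleib : ∀ f g h : Oring n, br f (g * h) = br f g * h + g * br f h)

noncomputable def Dmat (f : Oring n) (M : Matrix (Fin n) (Fin n) (Oring n)) :
    Matrix (Fin n) (Fin n) (Oring n) := Matrix.of fun i j => br f (M i j)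

include hadd in
lemma br_zero (f : Oring n) : br f 0 = 0 := by
  have h := hadd f 0 0
  rw [add_zero] at h
  exact (left_eq_add.mp h)

include hadd in
lemma br_sum (f : Oring n) {ι : Type*} (s : Finset ι) (g : ι → Oring n) :
    br f (∑ x ∈ s, g x) = ∑ x ∈ s, br f (g x) :=
  map_sum (AddMonoidHom.mk' (br f) (hadd f)) g s

include hleib in
lemma br_one (f : Oring n) : br f 1 = 0 := by
  have h := hleib f 1 1
  simp only [one_mul, mul_one] at h
  exact (left_eq_add.mp h)

include hadd hleib in
lemma Dmat_mul (f : Oring n) (A B : Matrix (Fin n) (Fin n) (Oring n)) :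
    Dmat br f (A * B) = Dmat br f A * B + A * Dmat br f B := by
  refine Matrix.ext fun i j => ?_
  simp only [Dmat, Matrix.add_apply, Matrix.mul_apply, Matrix.of_apply,
    br_sum br hadd]
  rw [← Finset.sum_add_distrib]
  exact Finset.sum_congr rfl fun k _ => hleib f _ _

include hadd hleib in
lemma Dmat_one : Dmat br (f : Oring n) (1 : Matrix (Fin n) (Fin n) (Oring n)) = 0 := by
  refine Matrix.ext fun i j => ?_
  simp only [Dmat, Matrix.of_apply, Matrix.one_apply, Matrix.zero_apply]
  split
  · exact br_one br hleib f
  · exact br_zero br hadd f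

include hadd hleib in
lemma Dmat_pow (f : Oring n) (m : ℕ) :
    Dmat br f (Zm n ^ m) =
      ∑ k ∈ Finset.range m, Zm n ^ k * Dmat br f (Zm n) * Zm n ^ (m - 1 - k) := by
  induction m with
  | zero => simp [pow_zero, Dmat_one br hadd hleib]
  | succ m ih =>
    rw [pow_succ, Dmat_mul br hadd hleib, ih, Finset.sum_range_succ, Finset.sum_mul]
    refine congrArg₂ (· + ·) ?_ ?_
    · refine Finset.sum_congr rfl fun k hk => ?_
      rw [Finset.mem_range] at hk
      rw [mul_assoc (Zm n ^ k * Dmat br f (Zm n)), ← pow_succ]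
      have e : m - 1 - k + 1 = m + 1 - 1 - k := by omega
      rw [e]
    · simp [Nat.sub_self, pow_zero]

include hadd hleib in
lemma br_trace_pow (f : Oring n) (m : ℕ) :
    br f ((Zm n ^ m).trace) =
      m • ((Dmat br f (Zm n)) * Zm n ^ (m - 1)).trace := by
  have h1 : br f ((Zm n ^ m).trace) = (Dmat br f (Zm n ^ m)).trace := by
    simp only [Matrix.trace, Matrix.diag, br_sum br hadd, Dmat, Matrix.of_apply]
  rw [h1, Dmat_pow br hadd hleib, Matrix.trace_sum]
  rw [Finset.sum_congr rfl (fun k hk => ?_), Finset.sum_const, Finset.card_range]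
  rw [Finset.mem_range] at hk
  rw [mul_assoc, Matrix.trace_mul_comm, mul_assoc, ← pow_add]
  have e : m - 1 - k + k = m - 1 := by omega
  rw [e]

end Aux

/-- the traces of powers of `Z` (the Ruijsenaars–Schneider Hamiltonians)
pairwise commute under the quasi-Poisson bracket. -/
theorem trace_pow_Z_bracket_trace_pow_Z (n : ℕ) (hn : 1 ≤ n)
    (br : Oring n → Oring n → Oring n)
    (hadd : ∀ f g h : Oring n, br f (g + h) = br f g + br f h)
    (hsmul : ∀ (c : ℂ) (f g : Oring n), br f (c • g) = c • br f g)
    (hleib : ∀ f g h : Oring n, br f (g * h) = br f g * h + g * br f h)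
    (hanti : ∀ f g : Oring n, br f g = - br g f)
    (hXX : ∀ i j u v : Fin n,
      br (Xm n i j) (Xm n u v) =
        (2⁻¹ : ℂ) • ((Xm n ^ 2) u j * kd n i v) - (2⁻¹ : ℂ) • (kd n u j * (Xm n ^ 2) i v))
    (hZZ : ∀ i j u v : Fin n,
      br (Zm n i j) (Zm n u v) =
        (2⁻¹ : ℂ) • (kd n u j * (Zm n ^ 2) i v) - (2⁻¹ : ℂ) • ((Zm n ^ 2) u j * kd n i v))
    (hXZ : ∀ i j u v : Fin n,
      br (Xm n i j) (Zm n u v) =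
        (2⁻¹ : ℂ) • ((Zm n * Xm n) u j * kd n i v)
          + (2⁻¹ : ℂ) • (kd n u j * (Xm n * Zm n) i v)
          + (2⁻¹ : ℂ) • (Zm n u j * Xm n i v)
          - (2⁻¹ : ℂ) • (Xm n u j * Zm n i v))
    (a b : ℕ) :
    br (Matrix.trace (Zm n ^ a)) (Matrix.trace (Zm n ^ b)) = 0 := by
  -- Step 1: the bracket of `tr(Z^a)` with each entry of `Z` vanishes.
  have key : ∀ u v : Fin n, br ((Zm n ^ a).trace) (Zm n u v) = 0 := by
    intro u v
    rw [hanti, br_trace_pow br hadd hleib, neg_eq_zero, smul_eq_zero]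
    right
    have hQP : Zm n ^ 2 * Zm n ^ (a - 1) = Zm n ^ (a - 1) * Zm n ^ 2 := pow_mul_comm _ _ _
    simp only [Matrix.trace, Matrix.diag, Matrix.mul_apply, Dmat, Matrix.of_apply]
    have hM : ∀ i j : Fin n, br (Zm n u v) (Zm n i j) =
        (2⁻¹ : ℂ) • (kd n i v * (Zm n ^ 2) u j) - (2⁻¹ : ℂ) • ((Zm n ^ 2) i v * kd n u j) :=
      fun i j => hZZ u v i j
    simp only [hM, kd, sub_mul, smul_mul_assoc, Finset.sum_sub_distrib, ite_mul, one_mul,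
      zero_mul, mul_ite, mul_one, mul_zero, ← Finset.smul_sum]
    rw [sub_eq_zero]
    congr 1
    have h1 : (∑ x : Fin n, ∑ x1 : Fin n,
        if x = v then (Zm n ^ 2) u x1 * (Zm n ^ (a - 1)) x1 x else 0)
        = (Zm n ^ 2 * Zm n ^ (a - 1)) u v := by
      rw [Finset.sum_comm, Matrix.mul_apply]
      refine Finset.sum_congr rfl fun x1 _ => ?_
      simp [Finset.sum_ite_eq']
    have h2 : (∑ x : Fin n, ∑ x1 : Fin n,
        if u = x1 then (Zm n ^ 2) x v * (Zm n ^ (a - 1)) x1 x else 0)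
        = (Zm n ^ (a - 1) * Zm n ^ 2) u v := by
      rw [Matrix.mul_apply]
      refine Finset.sum_congr rfl fun x _ => ?_
      simp [Finset.sum_ite_eq, mul_comm]
    rw [h1, h2, hQP]
  -- Step 2: conclude by deriving along the entries of `Z^b`.
  rw [br_trace_pow br hadd hleib]
  have hD : Dmat br ((Zm n ^ a).trace) (Zm n) = 0 := by
    refine Matrix.ext fun u v => ?_
    simpa [Dmat] using key u v
  rw [hD, Matrix.zero_mul, Matrix.trace_zero, smul_zero]
end

section
/- For all natural numbers a, b one has {tr(X^a), tr(Z X^b)} = a · tr(Z X^{a+b}) in 𝒪ₙ. -/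
open Matrix Finset

section DerLemmas

variable {n : ℕ} {D : Oring n → Oring n}

lemma Dzero (hadd : ∀ f g : Oring n, D (f + g) = D f + D g) : D 0 = 0 := by
  have h := hadd 0 0
  rw [add_zero] at h
  exact (left_eq_add.mp h)

lemma Done (hmul : ∀ f g : Oring n, D (f * g) = D f * g + f * D g) : D 1 = 0 := by
  have h := hmul 1 1
  rw [mul_one, one_mul, mul_one] at h
  exact (left_eq_add.mp h)

lemma Dsum (hadd : ∀ f g : Oring n, D (f + g) = D f + D g)
    {ι : Type*} (s : Finset ι) (f : ι → Oring n) :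
    D (∑ i ∈ s, f i) = ∑ i ∈ s, D (f i) := by
  classical
  induction s using Finset.cons_induction with
  | empty => simpa using Dzero hadd
  | cons a s ha ih => rw [Finset.sum_cons, hadd, ih, Finset.sum_cons]

lemma Dmat_mul_s3 (hadd : ∀ f g : Oring n, D (f + g) = D f + D g)
    (hmul : ∀ f g : Oring n, D (f * g) = D f * g + f * D g)
    (A B : Matrix (Fin n) (Fin n) (Oring n)) :
    (Matrix.of fun p r => D ((A * B) p r)) =
      (Matrix.of fun p r => D (A p r)) * B + A * (Matrix.of fun p r => D (B p r)) := by
  refine Matrix.ext fun p r => ?_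
  simp only [Matrix.of_apply, Matrix.add_apply, Matrix.mul_apply]
  rw [Dsum hadd]
  rw [← Finset.sum_add_distrib]
  exact Finset.sum_congr rfl fun j _ => hmul _ _

lemma Dmat_pow_s3 (hadd : ∀ f g : Oring n, D (f + g) = D f + D g)
    (hmul : ∀ f g : Oring n, D (f * g) = D f * g + f * D g)
    (M : Matrix (Fin n) (Fin n) (Oring n)) (m : ℕ) :
    (Matrix.of fun p r => D ((M ^ m) p r)) =
      ∑ k ∈ Finset.range m, M ^ k * (Matrix.of fun p r => D (M p r)) * M ^ (m - 1 - k) := by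
  induction m with
  | zero =>
    refine Matrix.ext fun p r => ?_
    simp only [pow_zero, Matrix.of_apply, Matrix.one_apply, Finset.range_zero,
      Finset.sum_empty, Matrix.zero_apply]
    split_ifs
    · exact Done hmul
    · exact Dzero hadd
  | succ m ih =>
    have : (Matrix.of fun p r => D ((M ^ (m + 1)) p r)) =
        (Matrix.of fun p r => D ((M ^ m) p r)) * M + M ^ m * (Matrix.of fun p r => D (M p r)) := by
      rw [pow_succ]
      exact Dmat_mul_s3 hadd hmul _ _
    rw [this, ih, Finset.sum_mul, Finset.sum_range_succ]
    refine congrArg₂ (· + ·) ?_ ?_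
    · refine Finset.sum_congr rfl fun k hk => ?_
      have hk' : k < m := Finset.mem_range.mp hk
      rw [mul_assoc, mul_assoc, ← pow_succ,
        show m - 1 - k + 1 = m + 1 - 1 - k from by omega, ← mul_assoc]
    · rw [show m + 1 - 1 - m = 0 from by omega, pow_zero, mul_one]

lemma D_trace (hadd : ∀ f g : Oring n, D (f + g) = D f + D g)
    (A : Matrix (Fin n) (Fin n) (Oring n)) :
    D (Matrix.trace A) = Matrix.trace (Matrix.of fun p r => D (A p r)) := by
  simp only [Matrix.trace, Matrix.diag, Matrix.of_apply]
  exact Dsum hadd _ _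

lemma D_trace_pow (hadd : ∀ f g : Oring n, D (f + g) = D f + D g)
    (hmul : ∀ f g : Oring n, D (f * g) = D f * g + f * D g)
    (M : Matrix (Fin n) (Fin n) (Oring n)) (m : ℕ) :
    D (Matrix.trace (M ^ m)) =
      m • Matrix.trace (M ^ (m - 1) * (Matrix.of fun p r => D (M p r))) := by
  rw [D_trace hadd, Dmat_pow_s3 hadd hmul, Matrix.trace_sum]
  rw [Finset.sum_congr rfl (fun k hk =>
    show Matrix.trace (M ^ k * (Matrix.of fun p r => D (M p r)) * M ^ (m - 1 - k)) =
      Matrix.trace (M ^ (m - 1) * (Matrix.of fun p r => D (M p r))) from ?_)]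
  · rw [Finset.sum_const, Finset.card_range]
  · have hk' : k < m := Finset.mem_range.mp hk
    rw [Matrix.trace_mul_cycle, ← pow_add,
      show m - 1 - k + k = m - 1 from by omega]

end DerLemmas

set_option maxHeartbeats 1000000 in
/-- `{tr(X^a), tr(Z X^b)} = a · tr(Z X^{a+b})`. -/
theorem trace_pow_X_bracket_trace_ZX (n : ℕ) (hn : 1 ≤ n)
    (br : Oring n → Oring n → Oring n)
    (hadd : ∀ f g h : Oring n, br f (g + h) = br f g + br f h)
    (hsmul : ∀ (c : ℂ) (f g : Oring n), br f (c • g) = c • br f g)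
    (hleib : ∀ f g h : Oring n, br f (g * h) = br f g * h + g * br f h)
    (hanti : ∀ f g : Oring n, br f g = - br g f)
    (hXX : ∀ i j u v : Fin n,
      br (Xm n i j) (Xm n u v) =
        (2⁻¹ : ℂ) • ((Xm n ^ 2) u j * kd n i v) - (2⁻¹ : ℂ) • (kd n u j * (Xm n ^ 2) i v))
    (hZZ : ∀ i j u v : Fin n,
      br (Zm n i j) (Zm n u v) =
        (2⁻¹ : ℂ) • (kd n u j * (Zm n ^ 2) i v) - (2⁻¹ : ℂ) • ((Zm n ^ 2) u j * kd n i v))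
    (hXZ : ∀ i j u v : Fin n,
      br (Xm n i j) (Zm n u v) =
        (2⁻¹ : ℂ) • ((Zm n * Xm n) u j * kd n i v)
          + (2⁻¹ : ℂ) • (kd n u j * (Xm n * Zm n) i v)
          + (2⁻¹ : ℂ) • (Zm n u j * Xm n i v)
          - (2⁻¹ : ℂ) • (Xm n u j * Zm n i v))
    (a b : ℕ) :
    br (Matrix.trace (Xm n ^ a)) (Matrix.trace (Zm n * Xm n ^ b)) =
      (a : Oring n) * Matrix.trace (Zm n * Xm n ^ (a + b)) := by
  classical
  -- Step 1: br (X i j) (trace (X^m)) = 0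
  have hXtr : ∀ (i j : Fin n) (m : ℕ), br (Xm n i j) (Matrix.trace (Xm n ^ m)) = 0 := by
    intro i j m
    rw [D_trace_pow (hadd _) (hleib _) (Xm n) m]
    have htr0 : Matrix.trace (Xm n ^ (m - 1) *
        (Matrix.of fun p r => br (Xm n i j) (Xm n p r))) = 0 := by
      simp only [Matrix.trace, Matrix.diag, Matrix.mul_apply, Matrix.of_apply, hXX, kd,
        mul_sub, mul_smul_comm, Finset.sum_sub_distrib, ← Finset.smul_sum, mul_ite, ite_mul,
        mul_one, mul_zero, one_mul, zero_mul, Finset.sum_ite_eq, Finset.sum_ite_eq',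
        Finset.mem_univ, if_true]
      have h1 : ∀ x1 : Fin n, (∑ x : Fin n,
          if i = x then (Xm n ^ (m - 1)) x x1 * (Xm n ^ 2) x1 j else 0) =
          (Xm n ^ (m - 1)) i x1 * (Xm n ^ 2) x1 j := fun x1 => by simp
      rw [Finset.sum_comm, Finset.sum_congr rfl fun x1 _ => h1 x1, sub_eq_zero]
      refine congrArg (fun t => (2⁻¹ : ℂ) • t) ?_
      calc (∑ x1 : Fin n, (Xm n ^ (m - 1)) i x1 * (Xm n ^ 2) x1 j)
          = (Xm n ^ (m - 1) * Xm n ^ 2) i j := (Matrix.mul_apply).symm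
        _ = (Xm n ^ 2 * Xm n ^ (m - 1)) i j := by rw [pow_mul_comm]
        _ = ∑ x : Fin n, (Xm n ^ (m - 1)) x j * (Xm n ^ 2) i x := by
            rw [Matrix.mul_apply]
            exact Finset.sum_congr rfl fun x _ => mul_comm _ _
    rw [htr0, smul_zero]
  -- Step 2: br (Z u v) (trace (X^m)) = -(m * (Z X^m)_{uv})
  have hZtr : ∀ (u v : Fin n) (m : ℕ), br (Zm n u v) (Matrix.trace (Xm n ^ m)) =
      -((m : Oring n) * (Zm n * Xm n ^ m) u v) := by
    intro u v m
    rw [D_trace_pow (hadd _) (hleib _) (Xm n) m]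
    cases m with
    | zero => simp
    | succ m =>
      have hC : Matrix.trace (Xm n ^ (m + 1 - 1) *
          (Matrix.of fun p r => br (Zm n u v) (Xm n p r))) =
          -((Zm n * Xm n ^ (m + 1)) u v) := by
        have hbr : ∀ p r : Fin n, br (Zm n u v) (Xm n p r) =
            -((2⁻¹ : ℂ) • ((Zm n * Xm n) u r * kd n p v)
              + (2⁻¹ : ℂ) • (kd n u r * (Xm n * Zm n) p v)
              + (2⁻¹ : ℂ) • (Zm n u r * Xm n p v)
              - (2⁻¹ : ℂ) • (Xm n u r * Zm n p v)) := by
          intro p r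
          rw [show br (Zm n u v) (Xm n p r) = -br (Xm n p r) (Zm n u v) from
            (hanti _ _).symm ▸ rfl, hXZ p r u v]
        simp only [Matrix.trace, Matrix.diag, Matrix.mul_apply, Matrix.of_apply, hbr, kd,
          Nat.add_sub_cancel, mul_neg, mul_add, mul_sub, mul_smul_comm,
          Finset.sum_neg_distrib, Finset.sum_add_distrib, Finset.sum_sub_distrib,
          ← Finset.smul_sum, mul_ite, ite_mul, mul_one, mul_zero, one_mul, zero_mul,
          Finset.sum_ite_eq, Finset.sum_ite_eq', Finset.mem_univ, if_true]
        have key : ∀ (A B : Matrix (Fin n) (Fin n) (Oring n)),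
            (∑ x : Fin n, ∑ x1 : Fin n, (Xm n ^ m) x x1 * (A u x * B x1 v)) =
            (A * Xm n ^ m * B) u v := by
          intro A B
          rw [Matrix.mul_apply]
          simp only [Matrix.mul_apply, Finset.sum_mul]
          rw [Finset.sum_comm]
          exact Finset.sum_congr rfl fun x _ =>
            Finset.sum_congr rfl fun x1 _ => by ring
        have e1 : (∑ x : Fin n, (Xm n ^ m) x v * ∑ j : Fin n, Zm n u j * Xm n j x) =
            (Zm n * Xm n ^ (m + 1)) u v := by
          rw [show Zm n * Xm n ^ (m + 1) = Zm n * Xm n * Xm n ^ m from by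
            rw [mul_assoc, ← pow_succ'], Matrix.mul_apply]
          exact Finset.sum_congr rfl fun x _ => by
            rw [Matrix.mul_apply]
            ring
        have e2 : (∑ x : Fin n, ∑ x1 : Fin n,
            if u = x then (Xm n ^ m) x x1 * ∑ j : Fin n, Xm n x1 j * Zm n j v else 0) =
            (Xm n ^ (m + 1) * Zm n) u v := by
          rw [Finset.sum_comm]
          simp only [Finset.sum_ite_eq, Finset.mem_univ, if_true]
          rw [show Xm n ^ (m + 1) * Zm n = Xm n ^ m * (Xm n * Zm n) from by
            rw [pow_succ, mul_assoc], Matrix.mul_apply]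
          exact Finset.sum_congr rfl fun x1 _ => by rw [Matrix.mul_apply]
        have e3 : (∑ x : Fin n, ∑ x1 : Fin n, (Xm n ^ m) x x1 * (Zm n u x * Xm n x1 v)) =
            (Zm n * Xm n ^ (m + 1)) u v := by
          rw [show Zm n * Xm n ^ (m + 1) = Zm n * Xm n ^ m * Xm n from by
            rw [mul_assoc, ← pow_succ]]
          exact key _ _
        have e4 : (∑ x : Fin n, ∑ x1 : Fin n, (Xm n ^ m) x x1 * (Xm n u x * Zm n x1 v)) =
            (Xm n ^ (m + 1) * Zm n) u v := by
          rw [show Xm n ^ (m + 1) * Zm n = Xm n * Xm n ^ m * Zm n from by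
            rw [← pow_succ']]
          exact key _ _
        rw [e1, e2, e3, e4, show (∑ j : Fin n, Zm n u j * (Xm n ^ (m + 1)) j v) =
          (Zm n * Xm n ^ (m + 1)) u v from (Matrix.mul_apply).symm]
        rw [add_right_comm, add_sub_cancel_right, ← add_smul]
        norm_num
      rw [hC]
      rw [smul_neg, nsmul_eq_mul]
  -- Step 3: br (trace X^a) ((X^c) p q) = 0
  have hDX0 : (Matrix.of fun p r => br (Matrix.trace (Xm n ^ a)) (Xm n p r)) = 0 :=
    Matrix.ext fun p r => by
      simp only [Matrix.of_apply, Matrix.zero_apply]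
      rw [hanti, hXtr p r a, neg_zero]
  have hpowX : ∀ (c : ℕ) (p q : Fin n),
      br (Matrix.trace (Xm n ^ a)) ((Xm n ^ c) p q) = 0 := by
    intro c p q
    have hm := Dmat_pow_s3 (hadd (Matrix.trace (Xm n ^ a))) (hleib _) (Xm n) c
    rw [hDX0] at hm
    simp only [mul_zero, zero_mul, Finset.sum_const_zero] at hm
    have h2 := congrFun (congrFun hm p) q
    simpa using h2
  -- Step 4: br (trace X^a) (Z u w) = a * (Z X^a)_{uw}
  have hZa : ∀ (u w : Fin n), br (Matrix.trace (Xm n ^ a)) (Zm n u w) =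
      (a : Oring n) * (Zm n * Xm n ^ a) u w := by
    intro u w
    rw [hanti, hZtr u w a, neg_neg]
  -- Final assembly
  have htr : Matrix.trace (Zm n * Xm n ^ b) =
      ∑ u : Fin n, ∑ w : Fin n, Zm n u w * (Xm n ^ b) w u := by
    simp [Matrix.trace, Matrix.diag, Matrix.mul_apply]
  rw [htr, Dsum (hadd _)]
  have hterm : ∀ u : Fin n,
      br (Matrix.trace (Xm n ^ a)) (∑ w : Fin n, Zm n u w * (Xm n ^ b) w u) =
      ∑ w : Fin n, (a : Oring n) * (Zm n * Xm n ^ a) u w * (Xm n ^ b) w u := by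
    intro u
    rw [Dsum (hadd _)]
    refine Finset.sum_congr rfl fun w _ => ?_
    rw [hleib, hZa, hpowX b w u, mul_zero, add_zero]
  rw [Finset.sum_congr rfl fun u _ => hterm u]
  have htr2 : Matrix.trace (Zm n * Xm n ^ (a + b)) =
      ∑ u : Fin n, ∑ w : Fin n, (Zm n * Xm n ^ a) u w * (Xm n ^ b) w u := by
    rw [pow_add, ← mul_assoc]
    simp [Matrix.trace, Matrix.diag, Matrix.mul_apply]
  rw [htr2, Finset.mul_sum]
  exact Finset.sum_congr rfl fun u _ => by
    rw [Finset.mul_sum]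
    exact Finset.sum_congr rfl fun w _ => by ring
end

section
/- Self-duality of the Ruijsenaars–Schneider phase space at the level of the bracket: let s : 𝒪ₙ → 𝒪ₙ be the ℂ-algebra automorphism determined by s(X_{ij}) = Z_{ij} and s(Z_{ij}) = X_{ij} for all i,j. Then for all f, g ∈ 𝒪ₙ one has {s(f), s(g)} = − s({f, g}); i.e., swapping X and Z changes the sign of the quasi-Poisson bracket. -/
open Matrix Finset

/-- swapping `X` and `Z` changes the sign of the quasi-Poisson bracket. -/
theorem swap_X_Z_antiPoisson (n : ℕ) (hn : 1 ≤ n)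
    (br : Oring n → Oring n → Oring n)
    (hadd : ∀ f g h : Oring n, br f (g + h) = br f g + br f h)
    (hsmul : ∀ (c : ℂ) (f g : Oring n), br f (c • g) = c • br f g)
    (hleib : ∀ f g h : Oring n, br f (g * h) = br f g * h + g * br f h)
    (hanti : ∀ f g : Oring n, br f g = - br g f)
    (hXX : ∀ i j u v : Fin n,
      br (Xm n i j) (Xm n u v) =
        (2⁻¹ : ℂ) • ((Xm n ^ 2) u j * kd n i v) - (2⁻¹ : ℂ) • (kd n u j * (Xm n ^ 2) i v))
    (hZZ : ∀ i j u v : Fin n,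
      br (Zm n i j) (Zm n u v) =
        (2⁻¹ : ℂ) • (kd n u j * (Zm n ^ 2) i v) - (2⁻¹ : ℂ) • ((Zm n ^ 2) u j * kd n i v))
    (hXZ : ∀ i j u v : Fin n,
      br (Xm n i j) (Zm n u v) =
        (2⁻¹ : ℂ) • ((Zm n * Xm n) u j * kd n i v)
          + (2⁻¹ : ℂ) • (kd n u j * (Xm n * Zm n) i v)
          + (2⁻¹ : ℂ) • (Zm n u j * Xm n i v)
          - (2⁻¹ : ℂ) • (Xm n u j * Zm n i v))
    (s : Oring n →ₐ[ℂ] Oring n)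
    (hsX : ∀ i j : Fin n, s (Xm n i j) = Zm n i j)
    (hsZ : ∀ i j : Fin n, s (Zm n i j) = Xm n i j) :
    ∀ f g : Oring n, br (s f) (s g) = - s (br f g) := by
  classical
  -- basic consequences
  have hone : ∀ f : Oring n, br f 1 = 0 := by
    intro f
    have h := hleib f 1 1
    rw [mul_one, mul_one, one_mul] at h
    have h2 : br f 1 + 0 = br f 1 + br f 1 := by simpa using h
    exact (add_left_cancel h2).symm
  have hCr : ∀ (a : ℂ) (f : Oring n), br f (MvPolynomial.C a) = 0 := by
    intro a f
    have : (MvPolynomial.C a : Oring n) = a • 1 := by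
      rw [MvPolynomial.smul_eq_C_mul, mul_one]
    rw [this, hsmul, hone, smul_zero]
  have hCl : ∀ (a : ℂ) (f : Oring n), br (MvPolynomial.C a) f = 0 := by
    intro a f
    rw [hanti, hCr, neg_zero]
  have hadd' : ∀ f g h : Oring n, br (f + g) h = br f h + br g h := by
    intro f g h
    rw [hanti, hadd, neg_add, ← hanti, ← hanti]
  have hmul' : ∀ f g h : Oring n, br (f * g) h = br f h * g + f * br g h := by
    intro f g h
    rw [hanti (f * g) h, hleib, hanti f h, hanti g h]; ring
  have hsC : ∀ a : ℂ, s (MvPolynomial.C a) = MvPolynomial.C a := by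
    intro a
    rw [← MvPolynomial.algebraMap_eq]
    exact s.commutes a
  -- s on products of matrix entries
  have hskd : ∀ i j : Fin n, s (kd n i j) = kd n i j := by
    intro i j; unfold kd; split <;> simp
  have hsX2 : ∀ i j : Fin n, s ((Xm n ^ 2) i j) = (Zm n ^ 2) i j := by
    intro i j
    rw [pow_two, pow_two, Matrix.mul_apply, Matrix.mul_apply, map_sum]
    exact Finset.sum_congr rfl fun k _ => by rw [_root_.map_mul, hsX, hsX]
  have hsZ2 : ∀ i j : Fin n, s ((Zm n ^ 2) i j) = (Xm n ^ 2) i j := by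
    intro i j
    rw [pow_two, pow_two, Matrix.mul_apply, Matrix.mul_apply, map_sum]
    exact Finset.sum_congr rfl fun k _ => by rw [_root_.map_mul, hsZ, hsZ]
  have hsXZ : ∀ i j : Fin n, s ((Xm n * Zm n) i j) = (Zm n * Xm n) i j := by
    intro i j
    rw [Matrix.mul_apply, Matrix.mul_apply, map_sum]
    exact Finset.sum_congr rfl fun k _ => by rw [_root_.map_mul, hsX, hsZ]
  have hsZX : ∀ i j : Fin n, s ((Zm n * Xm n) i j) = (Xm n * Zm n) i j := by
    intro i j
    rw [Matrix.mul_apply, Matrix.mul_apply, map_sum]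
    exact Finset.sum_congr rfl fun k _ => by rw [_root_.map_mul, hsZ, hsX]
  -- the X-Z generator case
  have hXZcase : ∀ i j u v : Fin n,
      br (s (Xm n i j)) (s (Zm n u v)) = - s (br (Xm n i j) (Zm n u v)) := by
    intro i j u v
    rw [hsX, hsZ, hanti, hXZ u v i j, hXZ i j u v]
    rw [map_sub, map_add, map_add, _root_.map_smul, _root_.map_smul, _root_.map_smul, _root_.map_smul,
      _root_.map_mul, _root_.map_mul, _root_.map_mul, _root_.map_mul, hsZX, hskd, hskd, hsXZ, hsX, hsZ, hsX, hsZ]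
    simp only [Algebra.smul_def]
    ring
  -- the generator pair case
  have pair : ∀ v w : (Fin n × Fin n) ⊕ (Fin n × Fin n),
      br (s (MvPolynomial.X v)) (s (MvPolynomial.X w))
        = - s (br (MvPolynomial.X v) (MvPolynomial.X w)) := by
    rintro (⟨i, j⟩ | ⟨i, j⟩) (⟨u, v⟩ | ⟨u, v⟩)
    · show br (s (Xm n i j)) (s (Xm n u v)) = - s (br (Xm n i j) (Xm n u v))
      rw [hsX, hsX, hZZ, hXX]
      rw [map_sub, _root_.map_smul, _root_.map_smul, _root_.map_mul, _root_.map_mul, hsX2, hskd, hskd, hsX2]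
      rw [neg_sub]
    · exact hXZcase i j u v
    · show br (s (Zm n i j)) (s (Xm n u v)) = - s (br (Zm n i j) (Xm n u v))
      rw [hanti (s (Zm n i j)), hXZcase u v i j, neg_neg,
        hanti (Zm n i j), map_neg, neg_neg]
    · show br (s (Zm n i j)) (s (Zm n u v)) = - s (br (Zm n i j) (Zm n u v))
      rw [hsZ, hsZ, hXX, hZZ]
      rw [map_sub, _root_.map_smul, _root_.map_smul, _root_.map_mul, _root_.map_mul, hsZ2, hskd, hskd, hsZ2]
      rw [neg_sub]
  -- one variable vs arbitrary polynomial
  have varcase : ∀ (v : (Fin n × Fin n) ⊕ (Fin n × Fin n)) (g : Oring n),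
      br (s (MvPolynomial.X v)) (s g) = - s (br (MvPolynomial.X v) g) := by
    intro v g
    induction g using MvPolynomial.induction_on with
    | C a => rw [hsC, hCr, hCr, map_zero, neg_zero]
    | add p q hp hq => rw [map_add, hadd, hadd, map_add, hp, hq, neg_add]
    | mul_X p w hp =>
        rw [_root_.map_mul, hleib, hleib, map_add, _root_.map_mul, _root_.map_mul, hp, pair, neg_add,
          neg_mul, mul_neg]
  -- general case
  intro f g
  induction f using MvPolynomial.induction_on with
  | C a => rw [hsC, hCl, hCl, map_zero, neg_zero]
  | add p q hp hq => rw [map_add, hadd', hadd', map_add, hp, hq, neg_add]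
  | mul_X p w hp =>
      rw [_root_.map_mul, hmul', hmul', map_add, _root_.map_mul, _root_.map_mul, hp, varcase, neg_add,
        neg_mul, mul_neg]
end

section
/- Under the stated genericity assumptions, the matrix XZ − q·ZX has entries (XZ − q·ZX)_{ij} = (1−q)·ν_j·x_j for all i, j; consequently XZ − q·ZX has rank at most 1, and (assuming moreover that Z is invertible) the matrix X·Z·X^{−1}·Z^{−1} − q·Idₙ has rank at most 1. -/
open Matrix Finset

/-- The Ruijsenaars–Schneider Lax matrix `Z` with entries
`Z_{ij} = (q−1)ν_j/(q − x_i x_j⁻¹)`. -/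
noncomputable def RSLax (n : ℕ) (q : ℂ) (x ν : Fin n → ℂ) : Matrix (Fin n) (Fin n) ℂ :=
  Matrix.of fun i j => ((q - 1) * ν j) / (q - x i * (x j)⁻¹)

/-- `(XZ − q·ZX)_{ij} = (1−q)·ν_j·x_j`, hence `XZ − q·ZX` has rank at most `1`,
and if moreover `Z` is invertible then `X·Z·X⁻¹·Z⁻¹ − q·Idₙ` has rank at most `1`. -/
theorem RSLax_rank_one_condition (n : ℕ) (hn : 1 ≤ n) (q : ℂ) (hq : q ≠ 0)
    (x ν : Fin n → ℂ) (hx : ∀ i, x i ≠ 0) (hν : ∀ i, ν i ≠ 0)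
    (hxx : ∀ i j, i ≠ j → x i ≠ x j) (hqx : ∀ i j, x i ≠ q * x j) :
    (∀ i j, (Matrix.diagonal x * RSLax n q x ν - q • (RSLax n q x ν * Matrix.diagonal x)) i j
        = (1 - q) * ν j * x j) ∧
    (Matrix.diagonal x * RSLax n q x ν - q • (RSLax n q x ν * Matrix.diagonal x)).rank ≤ 1 ∧
    (IsUnit (RSLax n q x ν) →
      (Matrix.diagonal x * RSLax n q x ν * (Matrix.diagonal x)⁻¹ * (RSLax n q x ν)⁻¹
          - q • (1 : Matrix (Fin n) (Fin n) ℂ)).rank ≤ 1) := by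
  set Z := RSLax n q x ν with hZ
  have hentry : ∀ i j, (Matrix.diagonal x * Z - q • (Z * Matrix.diagonal x)) i j
      = (1 - q) * ν j * x j := by
    intro i j
    have hne : q * x j - x i ≠ 0 := sub_ne_zero.mpr (fun h => hqx i j h.symm)
    have hdd : q - x i * (x j)⁻¹ = (q * x j - x i) * (x j)⁻¹ := by
      rw [sub_mul, mul_inv_cancel_right₀ (hx j)]
    simp only [Matrix.sub_apply, Matrix.smul_apply, Matrix.diagonal_mul, Matrix.mul_diagonal,
      hZ, RSLax, Matrix.of_apply, smul_eq_mul, hdd]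
    rw [div_mul_eq_div_div_swap]
    simp only [div_eq_mul_inv, inv_inv]
    field_simp
    ring
  have hM : Matrix.diagonal x * Z - q • (Z * Matrix.diagonal x)
      = Matrix.vecMulVec (fun _ => (1 : ℂ)) (fun j => (1 - q) * ν j * x j) := by
    ext i j
    simp [hentry i j, Matrix.vecMulVec_apply]
  have hrank1 : (Matrix.diagonal x * Z - q • (Z * Matrix.diagonal x)).rank ≤ 1 := by
    rw [hM, Matrix.vecMulVec_eq (Fin 1)]
    refine le_trans (Matrix.rank_mul_le_left _ _) ?_
    exact le_trans (Matrix.rank_le_card_width _) (by simp)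
  refine ⟨hentry, hrank1, fun hZu => ?_⟩
  have hXu : IsUnit (Matrix.diagonal x) := by
    rw [Matrix.isUnit_iff_isUnit_det, Matrix.det_diagonal]
    exact isUnit_iff_ne_zero.mpr (Finset.prod_ne_zero_iff.mpr fun i _ => hx i)
  have key : Matrix.diagonal x * Z * (Matrix.diagonal x)⁻¹ * Z⁻¹
      - q • (1 : Matrix (Fin n) (Fin n) ℂ)
      = (Matrix.diagonal x * Z - q • (Z * Matrix.diagonal x)) * ((Matrix.diagonal x)⁻¹ * Z⁻¹) := by
    rw [sub_mul, Matrix.smul_mul]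
    congr 1
    · noncomm_ring
    · rw [Matrix.mul_assoc, ← Matrix.mul_assoc (Matrix.diagonal x),
        Matrix.mul_nonsing_inv _ (Matrix.isUnit_iff_isUnit_det _ |>.mp hXu),
        Matrix.one_mul, Matrix.mul_nonsing_inv _ (Matrix.isUnit_iff_isUnit_det _ |>.mp hZu)]
  rw [key]
  exact le_trans (Matrix.rank_mul_le_left _ _) hrank1
end

section
/- For all integers a > b ≥ 0 the following identity of complex numbers holds: Σ_{i≠j} (1−q)²(x_i+x_j) ν_i ν_j x_i^a x_j^b / ((x_i−x_j)(x_i x_j^{−1} − q)(x_j x_i^{−1} − q)) = Σ_{i≠j} (q−1)² ν_i ν_j / ((q − x_i x_j^{−1})(q − x_j x_i^{−1})) · Σ_{r=b+1}^{a} x_j^r x_i^{a+b−r}, where both double sums run over ordered pairs (i,j) with 1 ≤ i, j ≤ n and i ≠ j. -/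
open Finset

lemma geom_aux (m : ℕ) (u v : ℂ) :
    (∑ k ∈ range (m+1), u ^ k * v ^ (m - k)) * (u - v) = u ^ (m+1) - v ^ (m+1) := by
  simpa using geom_sum₂_mul u v (m+1)

lemma key_identity (X Y : ℂ) (a b : ℕ) (hab : b < a) :
    (X + Y) * (X ^ a * Y ^ b - Y ^ a * X ^ b) =
      (X - Y) * ((∑ r ∈ Finset.Icc (b+1) a, Y ^ r * X ^ (a + b - r)) +
        (∑ r ∈ Finset.Icc (b+1) a, X ^ r * Y ^ (a + b - r))) := by
  obtain ⟨m, rfl⟩ : ∃ m, a = b + 1 + m := ⟨a - (b+1), by omega⟩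
  rw [← Finset.Ico_add_one_right_eq_Icc, Finset.sum_Ico_eq_sum_range, Finset.sum_Ico_eq_sum_range]
  have hb : b + 1 + m + 1 - (b + 1) = m + 1 := by omega
  rw [hb]
  have e1 : ∑ k ∈ range (m+1), Y ^ (b + 1 + k) * X ^ (b + 1 + m + b - (b + 1 + k)) =
      Y ^ (b+1) * X ^ b * ∑ k ∈ range (m+1), Y ^ k * X ^ (m - k) := by
    rw [Finset.mul_sum]
    refine Finset.sum_congr rfl fun k hk => ?_
    have hk' : k ≤ m := by simpa [Nat.lt_succ] using hk
    have h2 : b + 1 + m + b - (b + 1 + k) = b + (m - k) := by omega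
    rw [h2, pow_add, pow_add, pow_add]; ring
  have e2 : ∑ k ∈ range (m+1), X ^ (b + 1 + k) * Y ^ (b + 1 + m + b - (b + 1 + k)) =
      X ^ (b+1) * Y ^ b * ∑ k ∈ range (m+1), X ^ k * Y ^ (m - k) := by
    rw [Finset.mul_sum]
    refine Finset.sum_congr rfl fun k hk => ?_
    have hk' : k ≤ m := by simpa [Nat.lt_succ] using hk
    have h2 : b + 1 + m + b - (b + 1 + k) = b + (m - k) := by omega
    rw [h2, pow_add, pow_add, pow_add]; ring
  rw [e1, e2]
  have hg1 := geom_aux m Y X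
  have hg2 := geom_aux m X Y
  linear_combination (X:ℂ) ^ b * Y ^ (b+1) * hg1 - X ^ (b+1) * Y ^ b * hg2
lemma pair_identity (q X Y u v : ℂ) (hX : X ≠ 0) (hY : Y ≠ 0) (hXY : X ≠ Y)
    (h1 : X ≠ q * Y) (h2 : Y ≠ q * X) (a b : ℕ)
    (hkey : (X + Y) * (X ^ a * Y ^ b - Y ^ a * X ^ b) =
      (X - Y) * ((∑ r ∈ Finset.Icc (b+1) a, Y ^ r * X ^ (a + b - r)) +
        (∑ r ∈ Finset.Icc (b+1) a, X ^ r * Y ^ (a + b - r)))) :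
    ((1 - q) ^ 2 * (X + Y) * u * v * X ^ a * Y ^ b) /
        ((X - Y) * (X * Y⁻¹ - q) * (Y * X⁻¹ - q)) +
      ((1 - q) ^ 2 * (Y + X) * v * u * Y ^ a * X ^ b) /
        ((Y - X) * (Y * X⁻¹ - q) * (X * Y⁻¹ - q)) =
      ((q - 1) ^ 2 * u * v) / ((q - X * Y⁻¹) * (q - Y * X⁻¹)) *
          (∑ r ∈ Finset.Icc (b+1) a, Y ^ r * X ^ (a + b - r)) +
        ((q - 1) ^ 2 * v * u) / ((q - Y * X⁻¹) * (q - X * Y⁻¹)) *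
          (∑ r ∈ Finset.Icc (b+1) a, X ^ r * Y ^ (a + b - r)) := by
  have dXY : X - Y ≠ 0 := sub_ne_zero.mpr hXY
  have dYX : Y - X ≠ 0 := fun h => dXY (by linear_combination -h)
  have hP : X - q * Y ≠ 0 := sub_ne_zero.mpr h1
  have hQ : Y - q * X ≠ 0 := sub_ne_zero.mpr h2
  have r1 : X * Y⁻¹ - q = (X - q * Y) / Y := by field_simp
  have r2 : Y * X⁻¹ - q = (Y - q * X) / X := by field_simp
  have r3 : q - X * Y⁻¹ = -((X - q * Y) / Y) := by field_simp; ring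
  have r4 : q - Y * X⁻¹ = -((Y - q * X) / X) := by field_simp; ring
  have hP' : q * Y - X ≠ 0 := fun h => hP (by linear_combination -h)
  have hQ' : q * X - Y ≠ 0 := fun h => hQ (by linear_combination -h)
  rw [r1, r2, r3, r4]
  field_simp
  linear_combination ((1-q)^2*u*v*(Y-X)) * hkey

/-- identity between the two double sums appearing in the proof
that the map to the Ruijsenaars–Schneider phase space is Poisson. -/
theorem double_sum_identity (n : ℕ) (hn : 1 ≤ n) (q : ℂ) (hq : q ≠ 0)
    (x : Fin n → ℂ) (ν : Fin n → ℂ) (hx : ∀ i, x i ≠ 0)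
    (hxx : ∀ i j, i ≠ j → x i ≠ x j) (hqx : ∀ i j, x i ≠ q * x j)
    (a b : ℕ) (hab : b < a) :
    (∑ i : Fin n, ∑ j ∈ Finset.univ \ {i},
        ((1 - q) ^ 2 * (x i + x j) * ν i * ν j * x i ^ a * x j ^ b) /
          ((x i - x j) * (x i * (x j)⁻¹ - q) * (x j * (x i)⁻¹ - q))) =
      ∑ i : Fin n, ∑ j ∈ Finset.univ \ {i},
        ((q - 1) ^ 2 * ν i * ν j) / ((q - x i * (x j)⁻¹) * (q - x j * (x i)⁻¹)) *
          ∑ r ∈ Finset.Icc (b + 1) a, x j ^ r * x i ^ (a + b - r) := by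
  set F : Fin n → Fin n → ℂ := fun i j =>
    ((1 - q) ^ 2 * (x i + x j) * ν i * ν j * x i ^ a * x j ^ b) /
          ((x i - x j) * (x i * (x j)⁻¹ - q) * (x j * (x i)⁻¹ - q)) -
    ((q - 1) ^ 2 * ν i * ν j) / ((q - x i * (x j)⁻¹) * (q - x j * (x i)⁻¹)) *
          ∑ r ∈ Finset.Icc (b + 1) a, x j ^ r * x i ^ (a + b - r) with hF
  have hA : ∀ i j : Fin n, i ≠ j → F i j + F j i = 0 := by
    intro i j hij
    have hp := pair_identity q (x i) (x j) (ν i) (ν j) (hx i) (hx j) (hxx i j hij)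
      (hqx i j) (hqx j i) a b (key_identity (x i) (x j) a b hab)
    simp only [hF]
    linear_combination hp
  set H : Fin n → Fin n → ℂ := fun i j => if j = i then 0 else F i j with hH
  have hconv : ∀ (i : Fin n), ∑ j ∈ Finset.univ \ {i}, F i j = ∑ j, H i j := by
    intro i
    rw [hH]
    simp only []
    rw [Finset.sum_ite, Finset.sum_const_zero, zero_add]
    congr 1
    ext j
    simp [Finset.mem_filter, eq_comm]
  have hT : (∑ i, ∑ j, H i j) = 0 := by
    have hcomm : (∑ i, ∑ j, H i j) = ∑ i, ∑ j, H j i := Finset.sum_comm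
    have h2 : (∑ i, ∑ j, H i j) + (∑ i, ∑ j, H i j) = 0 := by
      nth_rewrite 2 [hcomm]
      rw [← Finset.sum_add_distrib]
      simp_rw [← Finset.sum_add_distrib]
      refine Finset.sum_eq_zero fun i _ => Finset.sum_eq_zero fun j _ => ?_
      by_cases hij : j = i
      · simp [hH, hij]
      · have hji : ¬ i = j := fun h => hij h.symm
        simp only [hH, if_neg hij, if_neg hji]
        exact hA i j hji
    exact add_self_eq_zero.mp h2
  have hS : ∑ i, ∑ j ∈ Finset.univ \ {i}, F i j = 0 := by
    rw [Finset.sum_congr rfl fun i _ => hconv i]; exact hT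
  rw [← sub_eq_zero, ← Finset.sum_sub_distrib]
  rw [← hS]
  exact Finset.sum_congr rfl fun i _ => (Finset.sum_sub_distrib _ _).symm
end

section
/- The functions σ_i(x,ν) = ν_i · Π_{j≠i} (1 − x_i x_j^{−1})/(1 − q x_i x_j^{−1}) on U satisfy {x_i, σ_j}' = δ_{ij} x_i σ_j and {σ_i, σ_j}' = 0 for all i, j; that is, (x₁,…,xₙ, σ₁,…,σₙ) are log-canonical (Darboux) coordinates for the bracket {−,−}'. -/
open Finset

/-- Partial derivative of `F : (x, ν) ↦ F(x, ν)` with respect to `x_k` at the point `p`. -/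
noncomputable def pderX (n : ℕ) (F : (Fin n → ℂ) × (Fin n → ℂ) → ℂ) (k : Fin n)
    (p : (Fin n → ℂ) × (Fin n → ℂ)) : ℂ :=
  deriv (fun s : ℂ => F (Function.update p.1 k s, p.2)) (p.1 k)

/-- Partial derivative of `F : (x, ν) ↦ F(x, ν)` with respect to `ν_k` at the point `p`. -/
noncomputable def pderN (n : ℕ) (F : (Fin n → ℂ) × (Fin n → ℂ) → ℂ) (k : Fin n)
    (p : (Fin n → ℂ) × (Fin n → ℂ)) : ℂ :=
  deriv (fun s : ℂ => F (p.1, Function.update p.2 k s)) (p.2 k)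

/-- The Poisson bracket `{F, G}'` of Proposition 3.7:
`{F,G}' = Σ_k x_k ν_k (∂F/∂x_k ∂G/∂ν_k − ∂G/∂x_k ∂F/∂ν_k) + Σ_{k≠l} π_{kl} ∂F/∂ν_k ∂G/∂ν_l`
with `π_{kl} = (1−q)²(x_k+x_l) x_k x_l ν_k ν_l/((x_k−x_l)(x_k−q x_l)(x_l−q x_k))`. -/
noncomputable def rsBracket (n : ℕ) (q : ℂ) (F G : (Fin n → ℂ) × (Fin n → ℂ) → ℂ)
    (p : (Fin n → ℂ) × (Fin n → ℂ)) : ℂ :=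
  (∑ k : Fin n, p.1 k * p.2 k *
      (pderX n F k p * pderN n G k p - pderX n G k p * pderN n F k p)) +
    ∑ k : Fin n, ∑ l ∈ Finset.univ \ {k},
      ((1 - q) ^ 2 * (p.1 k + p.1 l) * p.1 k * p.1 l * p.2 k * p.2 l) /
          ((p.1 k - p.1 l) * (p.1 k - q * p.1 l) * (p.1 l - q * p.1 k)) *
        pderN n F k p * pderN n G l p

/-- The function `σ_i(x, ν) = ν_i · Π_{j≠i} (1 − x_i x_j⁻¹)/(1 − q x_i x_j⁻¹)`. -/
noncomputable def sigmaF (n : ℕ) (q : ℂ) (i : Fin n)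
    (p : (Fin n → ℂ) × (Fin n → ℂ)) : ℂ :=
  p.2 i * ∏ j ∈ Finset.univ \ {i}, (1 - p.1 i * (p.1 j)⁻¹) / (1 - q * p.1 i * (p.1 j)⁻¹)

section Aux
variable (n : ℕ) (q : ℂ)

lemma pderN_coord (i k : Fin n) (p : (Fin n → ℂ) × (Fin n → ℂ)) :
    pderN n (fun p' => p'.1 i) k p = 0 := by
  simp [pderN]

lemma pderX_coord (i k : Fin n) (p : (Fin n → ℂ) × (Fin n → ℂ)) :
    pderX n (fun p' => p'.1 i) k p = if k = i then 1 else 0 := by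
  unfold pderX
  rcases eq_or_ne k i with h | h
  · subst h; simp
  · simp [Function.update_of_ne (Ne.symm h), h]

lemma pderN_sigma (i k : Fin n) (p : (Fin n → ℂ) × (Fin n → ℂ)) :
    pderN n (sigmaF n q i) k p =
      if k = i then
        ∏ j ∈ Finset.univ \ {i}, (1 - p.1 i * (p.1 j)⁻¹) / (1 - q * p.1 i * (p.1 j)⁻¹)
      else 0 := by
  unfold pderN sigmaF
  rcases eq_or_ne k i with h | h
  · subst h
    simp only [Function.update_self, if_pos rfl]
    exact ((hasDerivAt_id (p.2 k)).mul_const _).deriv.trans (one_mul _)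
  · simp [Function.update_of_ne (Ne.symm h), h]

lemma hasDerivAt_frac (a x : ℂ) (hx : x ≠ 0) (hxa : x ≠ q * a) :
    HasDerivAt (fun s : ℂ => (1 - a * s⁻¹) / (1 - q * a * s⁻¹))
      (a * (1 - q) / (x - q * a) ^ 2) x := by
  have hsub : x - q * a ≠ 0 := sub_ne_zero.mpr hxa
  have hd : (1 : ℂ) - q * a * x⁻¹ ≠ 0 := by
    have h : (1 : ℂ) - q * a * x⁻¹ = (x - q * a) / x := by field_simp
    rw [h]; exact div_ne_zero hsub hx
  have h1 : HasDerivAt (fun s : ℂ => 1 - a * s⁻¹) (-(a * -(x ^ 2)⁻¹)) x :=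
    ((hasDerivAt_inv hx).const_mul a).const_sub 1
  have h2 : HasDerivAt (fun s : ℂ => 1 - q * a * s⁻¹) (-(q * a * -(x ^ 2)⁻¹)) x :=
    ((hasDerivAt_inv hx).const_mul (q * a)).const_sub 1
  have hder := h1.div h2 hd
  have heq : (-(a * -(x ^ 2)⁻¹) * (1 - q * a * x⁻¹) - (1 - a * x⁻¹) * -(q * a * -(x ^ 2)⁻¹)) /
      (1 - q * a * x⁻¹) ^ 2 = a * (1 - q) / (x - q * a) ^ 2 := by
    rw [div_eq_div_iff (pow_ne_zero 2 hd) (pow_ne_zero 2 hsub)]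
    field_simp
    ring
  exact heq ▸ hder

lemma pderX_sigma_ne (i k : Fin n) (hik : k ≠ i) (p : (Fin n → ℂ) × (Fin n → ℂ))
    (hx : ∀ m, p.1 m ≠ 0) (hqx : p.1 k ≠ q * p.1 i) :
    pderX n (sigmaF n q i) k p =
      p.2 i * (p.1 i * (1 - q) / (p.1 k - q * p.1 i) ^ 2 *
        ∏ j ∈ (Finset.univ \ {i}).erase k,
          (1 - p.1 i * (p.1 j)⁻¹) / (1 - q * p.1 i * (p.1 j)⁻¹)) := by
  unfold pderX sigmaF
  have hk : k ∈ Finset.univ \ {i} := by simp [hik]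
  have hfun : (fun s : ℂ => p.2 i * ∏ j ∈ Finset.univ \ {i},
        (1 - Function.update p.1 k s i * (Function.update p.1 k s j)⁻¹) /
          (1 - q * Function.update p.1 k s i * (Function.update p.1 k s j)⁻¹)) =
      fun s : ℂ => p.2 i * ((1 - p.1 i * s⁻¹) / (1 - q * p.1 i * s⁻¹) *
        ∏ j ∈ (Finset.univ \ {i}).erase k,
          (1 - p.1 i * (p.1 j)⁻¹) / (1 - q * p.1 i * (p.1 j)⁻¹)) := by
    funext s
    rw [Function.update_of_ne (Ne.symm hik), ← Finset.mul_prod_erase _ _ hk,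
      Function.update_self]
    refine congrArg _ (congrArg _ (Finset.prod_congr rfl fun m hm => ?_))
    rw [Function.update_of_ne (Finset.ne_of_mem_erase hm)]
  simp only [hfun]
  exact (((hasDerivAt_frac q (p.1 i) (p.1 k) (hx k) hqx).mul_const _).const_mul
    (p.2 i)).deriv

end Aux

/-- `(x, σ)` are log-canonical coordinates, i.e. `{x_i, σ_j}' = δ_{ij} x_i σ_j`
and `{σ_i, σ_j}' = 0` at every point of the open set `U`. -/
theorem sigma_log_canonical (n : ℕ) (hn : 1 ≤ n) (q : ℂ) (hq0 : q ≠ 0) (hq1 : q ≠ 1)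
    (p : (Fin n → ℂ) × (Fin n → ℂ))
    (hx : ∀ k, p.1 k ≠ 0) (hν : ∀ k, p.2 k ≠ 0)
    (hxx : ∀ k l, k ≠ l → p.1 k ≠ p.1 l)
    (hqx : ∀ k l, k ≠ l → p.1 k ≠ q * p.1 l) :
    (∀ i j : Fin n,
      rsBracket n q (fun p' => p'.1 i) (sigmaF n q j) p =
        (if i = j then 1 else 0) * p.1 i * sigmaF n q j p) ∧
    (∀ i j : Fin n, rsBracket n q (sigmaF n q i) (sigmaF n q j) p = 0) := by
  constructor
  · intro i j
    unfold rsBracket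
    have h2 : (∑ k : Fin n, ∑ l ∈ Finset.univ \ {k},
        ((1 - q) ^ 2 * (p.1 k + p.1 l) * p.1 k * p.1 l * p.2 k * p.2 l) /
            ((p.1 k - p.1 l) * (p.1 k - q * p.1 l) * (p.1 l - q * p.1 k)) *
          pderN n (fun p' => p'.1 i) k p * pderN n (sigmaF n q j) l p) = 0 := by
      refine Finset.sum_eq_zero fun k _ => Finset.sum_eq_zero fun l _ => ?_
      rw [pderN_coord]; ring
    rw [h2, add_zero]
    rw [Finset.sum_eq_single i
      (fun b _ hb => by rw [pderX_coord, if_neg hb, pderN_coord]; ring)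
      (fun h => absurd (Finset.mem_univ i) h)]
    rw [pderX_coord, if_pos rfl, pderN_coord, pderN_sigma]
    unfold sigmaF
    rcases eq_or_ne i j with rfl | h
    · rw [if_pos rfl, if_pos rfl]; ring
    · rw [if_neg h, if_neg h]; ring
  · intro i j
    rcases eq_or_ne i j with rfl | hij
    · unfold rsBracket
      rw [Finset.sum_congr rfl (fun k _ => by
        rw [sub_self (pderX n (sigmaF n q i) k p * pderN n (sigmaF n q i) k p), mul_zero]),
        Finset.sum_const_zero, zero_add]
      refine Finset.sum_eq_zero fun k _ => Finset.sum_eq_zero fun l hl => ?_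
      have hlk : l ≠ k := by simpa using (Finset.mem_sdiff.mp hl).2
      rw [pderN_sigma, pderN_sigma]
      rcases eq_or_ne k i with rfl | hk
      · rw [if_neg hlk, mul_zero]
      · rw [if_neg hk, mul_zero, zero_mul]
    · have hji : j ≠ i := Ne.symm hij
      unfold rsBracket
      have h2 : (∑ k : Fin n, ∑ l ∈ Finset.univ \ {k},
          ((1 - q) ^ 2 * (p.1 k + p.1 l) * p.1 k * p.1 l * p.2 k * p.2 l) /
              ((p.1 k - p.1 l) * (p.1 k - q * p.1 l) * (p.1 l - q * p.1 k)) *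
            pderN n (sigmaF n q i) k p * pderN n (sigmaF n q j) l p) =
          ((1 - q) ^ 2 * (p.1 i + p.1 j) * p.1 i * p.1 j * p.2 i * p.2 j) /
              ((p.1 i - p.1 j) * (p.1 i - q * p.1 j) * (p.1 j - q * p.1 i)) *
            (∏ m ∈ Finset.univ \ {i}, (1 - p.1 i * (p.1 m)⁻¹) / (1 - q * p.1 i * (p.1 m)⁻¹)) *
            (∏ m ∈ Finset.univ \ {j}, (1 - p.1 j * (p.1 m)⁻¹) / (1 - q * p.1 j * (p.1 m)⁻¹)) := by
        rw [Finset.sum_eq_single i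
          (fun k _ hk => Finset.sum_eq_zero fun l _ => by
            rw [pderN_sigma, if_neg hk, mul_zero, zero_mul])
          (fun h => absurd (Finset.mem_univ i) h)]
        rw [Finset.sum_eq_single_of_mem j (by simp [hji])
          (fun l _ hlj => by rw [pderN_sigma (k := l), if_neg hlj, mul_zero])]
        rw [pderN_sigma, if_pos rfl, pderN_sigma, if_pos rfl, mul_assoc]
      rw [h2]
      have h1 : (∑ k : Fin n, p.1 k * p.2 k *
          (pderX n (sigmaF n q i) k p * pderN n (sigmaF n q j) k p -
            pderX n (sigmaF n q j) k p * pderN n (sigmaF n q i) k p)) =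
          p.1 i * p.2 i * (0 - pderX n (sigmaF n q j) i p *
            (∏ m ∈ Finset.univ \ {i}, (1 - p.1 i * (p.1 m)⁻¹) / (1 - q * p.1 i * (p.1 m)⁻¹))) +
          p.1 j * p.2 j * (pderX n (sigmaF n q i) j p *
            (∏ m ∈ Finset.univ \ {j}, (1 - p.1 j * (p.1 m)⁻¹) / (1 - q * p.1 j * (p.1 m)⁻¹)) - 0) := by
        rw [← Finset.sum_subset (Finset.subset_univ {i, j})
          (fun k _ hk => by
            simp only [Finset.mem_insert, Finset.mem_singleton, not_or] at hk
            rw [pderN_sigma, pderN_sigma, if_neg hk.2, if_neg hk.1]; ring)]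
        rw [Finset.sum_pair hij, pderN_sigma, pderN_sigma, pderN_sigma, pderN_sigma,
          if_neg hij, if_pos rfl, if_pos rfl, if_neg hji, mul_zero, mul_zero]
      rw [h1]
      rw [pderX_sigma_ne n q j i hij p hx (hqx i j hij),
        pderX_sigma_ne n q i j hji p hx (hqx j i hji)]
      have hj : j ∈ Finset.univ \ {i} := by simp [hji]
      have hi : i ∈ Finset.univ \ {j} := by simp [hij]
      rw [show (∏ m ∈ Finset.univ \ {i},
            (1 - p.1 i * (p.1 m)⁻¹) / (1 - q * p.1 i * (p.1 m)⁻¹)) =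
          (1 - p.1 i * (p.1 j)⁻¹) / (1 - q * p.1 i * (p.1 j)⁻¹) *
            ∏ m ∈ (Finset.univ \ {i}).erase j,
              (1 - p.1 i * (p.1 m)⁻¹) / (1 - q * p.1 i * (p.1 m)⁻¹) from
          (Finset.mul_prod_erase _ _ hj).symm,
        show (∏ m ∈ Finset.univ \ {j},
            (1 - p.1 j * (p.1 m)⁻¹) / (1 - q * p.1 j * (p.1 m)⁻¹)) =
          (1 - p.1 j * (p.1 i)⁻¹) / (1 - q * p.1 j * (p.1 i)⁻¹) *
            ∏ m ∈ (Finset.univ \ {j}).erase i,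
              (1 - p.1 j * (p.1 m)⁻¹) / (1 - q * p.1 j * (p.1 m)⁻¹) from
          (Finset.mul_prod_erase _ _ hi).symm]
      set a := p.1 i with ha
      set b := p.1 j with hb
      set u := p.2 i
      set v := p.2 j
      set Ri := ∏ m ∈ (Finset.univ \ {i}).erase j,
        (1 - a * (p.1 m)⁻¹) / (1 - q * a * (p.1 m)⁻¹)
      set Rj := ∏ m ∈ (Finset.univ \ {j}).erase i,
        (1 - b * (p.1 m)⁻¹) / (1 - q * b * (p.1 m)⁻¹)
      have ha0 : a ≠ 0 := hx i
      have hb0 : b ≠ 0 := hx j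
      have hab : a - b ≠ 0 := sub_ne_zero.mpr (hxx i j hij)
      have haqb : a - q * b ≠ 0 := sub_ne_zero.mpr (hqx i j hij)
      have hbqa : b - q * a ≠ 0 := sub_ne_zero.mpr (hqx j i hji)
      have hd1 : (1 : ℂ) - q * a * b⁻¹ ≠ 0 := by
        have h : (1 : ℂ) - q * a * b⁻¹ = (b - q * a) / b := by field_simp
        rw [h]; exact div_ne_zero hbqa hb0
      have hd2 : (1 : ℂ) - q * b * a⁻¹ ≠ 0 := by
        have h : (1 : ℂ) - q * b * a⁻¹ = (a - q * b) / a := by field_simp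
        rw [h]; exact div_ne_zero haqb ha0
      have e1 : (1 - a * b⁻¹) / (1 - q * a * b⁻¹) = (b - a) / (b - q * a) := by
        rw [div_eq_div_iff hd1 hbqa]; field_simp
      have e2 : (1 - b * a⁻¹) / (1 - q * b * a⁻¹) = (a - b) / (a - q * b) := by
        rw [div_eq_div_iff hd2 haqb]; field_simp
      rw [e1, e2]
      simp only [div_eq_mul_inv, mul_inv, ← inv_pow]
      linear_combination
        (-(a * b * u * v * Ri * Rj * (1 - q)) * (a - b) * (a - q * b)⁻¹ * ((b - q * a)⁻¹) ^ 2) *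
            mul_inv_cancel₀ haqb +
          (-(a * b * u * v * Ri * Rj * (1 - q)) * (a - b) * ((a - q * b)⁻¹) ^ 2 * (b - q * a)⁻¹) *
            mul_inv_cancel₀ hbqa +
          (-(a * b * u * v * Ri * Rj * (1 - q) ^ 2 * (a + b)) * (a - b) * ((a - q * b)⁻¹) ^ 2 *
              ((b - q * a)⁻¹) ^ 2) *
            mul_inv_cancel₀ hab
end

section
/- Reduction of the cyclic-quiver relations to the one-loop (tadpole) relations: let m ≥ 2, let q₀,…,q_{m−1} be nonzero complex numbers, set t_s = q₀·q₁⋯q_s for 0 ≤ s ≤ m−1 and t = t_{m−1}. Let A, B be invertible n×n complex matrices, Ṽ an n×1 matrix and W̃ a 1×n matrix such that A·B·A^{−1}·B^{−1}·(Idₙ + Ṽ·W̃) = t·Idₙ. Define X_s = Idₙ and Z_s = t_s·B for 0 ≤ s ≤ m−2, X_{m−1} = A, Z_{m−1} = t·A^{−1}·B, V = A^{−1}·B^{−1}·Ṽ and W = W̃·B·A. Then (Z_{i−1}·X_{i−1})^{−1}·X_i·Z_i = q_i·Idₙ for every 1 ≤ i ≤ m−1, and (Z_{m−1}·X_{m−1})^{−1}·X₀·Z₀·(Idₙ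 + V·W) = q₀·Idₙ. -/
open Matrix Finset

/-- `t_s = q₀·q₁⋯q_s`. -/
noncomputable def tpar (q : ℕ → ℂ) (s : ℕ) : ℂ := ∏ i ∈ Finset.range (s + 1), q i

/-- `X_s = Idₙ` for `0 ≤ s ≤ m−2` and `X_{m−1} = A`. -/
noncomputable def cycX (n m : ℕ) (A : Matrix (Fin n) (Fin n) ℂ) (s : ℕ) :
    Matrix (Fin n) (Fin n) ℂ :=
  if s = m - 1 then A else 1

/-- `Z_s = t_s·B` for `0 ≤ s ≤ m−2` and `Z_{m−1} = t·A⁻¹·B`. -/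
noncomputable def cycZ (n m : ℕ) (q : ℕ → ℂ) (A B : Matrix (Fin n) (Fin n) ℂ) (s : ℕ) :
    Matrix (Fin n) (Fin n) ℂ :=
  if s = m - 1 then tpar q (m - 1) • (A⁻¹ * B) else tpar q s • B

/-- the matrices `X_s, Z_s, V, W` built from a solution
`A·B·A⁻¹·B⁻¹·(Idₙ + Ṽ·W̃) = t·Idₙ` of the tadpole relation satisfy the multiplicative
preprojective relations of the framed cyclic quiver with `m` vertices. -/
theorem cyclic_relations_from_tadpole (n m : ℕ) (hm : 2 ≤ m)
    (q : ℕ → ℂ) (hq : ∀ s, s < m → q s ≠ 0)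
    (A B : Matrix (Fin n) (Fin n) ℂ) (hA : IsUnit A) (hB : IsUnit B)
    (Vt : Matrix (Fin n) (Fin 1) ℂ) (Wt : Matrix (Fin 1) (Fin n) ℂ)
    (hmom : A * B * A⁻¹ * B⁻¹ * (1 + Vt * Wt) = tpar q (m - 1) • 1) :
    (∀ i : ℕ, 1 ≤ i → i ≤ m - 1 →
      (cycZ n m q A B (i - 1) * cycX n m A (i - 1))⁻¹ * cycX n m A i * cycZ n m q A B i
        = q i • 1) ∧
    (cycZ n m q A B (m - 1) * cycX n m A (m - 1))⁻¹ * cycX n m A 0 * cycZ n m q A B 0 *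
        (1 + (A⁻¹ * B⁻¹ * Vt) * (Wt * B * A)) = q 0 • 1 := by
  have hAd : IsUnit A.det := (Matrix.isUnit_iff_isUnit_det A).mp hA
  have hBd : IsUnit B.det := (Matrix.isUnit_iff_isUnit_det B).mp hB
  have hAi : A⁻¹ * A = 1 := Matrix.nonsing_inv_mul A hAd
  have hAi' : A * A⁻¹ = 1 := Matrix.mul_nonsing_inv A hAd
  have hBi : B⁻¹ * B = 1 := Matrix.nonsing_inv_mul B hBd
  have hBi' : B * B⁻¹ = 1 := Matrix.mul_nonsing_inv B hBd
  have ht : ∀ s, s < m → tpar q s ≠ 0 := by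
    intro s hs
    refine Finset.prod_ne_zero_iff.mpr fun i hi => hq i ?_
    exact lt_of_lt_of_le (Finset.mem_range.mp hi) hs
  -- inverse of t_s • B for s < m
  have hsB : ∀ s, s < m → (tpar q s • B)⁻¹ = (tpar q s)⁻¹ • B⁻¹ := by
    intro s hs
    refine Matrix.inv_eq_left_inv ?_
    rw [Matrix.smul_mul, Matrix.mul_smul, hBi, smul_smul,
      inv_mul_cancel₀ (ht s hs), one_smul]
  have hmm : m - 1 < m := by omega
  have htpar_succ : ∀ i : ℕ, 1 ≤ i → tpar q i = tpar q (i - 1) * q i := by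
    intro i hi
    have : i - 1 + 1 = i := by omega
    rw [tpar, tpar, this, Finset.prod_range_succ]
  constructor
  · intro i hi1 hi2
    have hi1m : i - 1 ≠ m - 1 := by omega
    have him : i - 1 < m := by omega
    have hivm : i < m := by omega
    have key : cycX n m A i * cycZ n m q A B i = tpar q i • B := by
      by_cases h : i = m - 1
      · rw [cycX, cycZ, if_pos h, if_pos h, Matrix.mul_smul, ← Matrix.mul_assoc, hAi',
          Matrix.one_mul, h]
      · rw [cycX, cycZ, if_neg h, if_neg h, Matrix.one_mul]
    rw [cycX, cycZ, if_neg hi1m, if_neg hi1m, Matrix.mul_one, Matrix.mul_assoc, key,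
      hsB _ him, Matrix.smul_mul, Matrix.mul_smul, hBi, smul_smul, htpar_succ i hi1,
      ← mul_assoc, inv_mul_cancel₀ (ht _ him), one_mul]
  · have h0m : (0 : ℕ) ≠ m - 1 := by omega
    set t := tpar q (m - 1) with htdef
    have htne : t ≠ 0 := ht _ hmm
    have cA : ∀ X : Matrix (Fin n) (Fin n) ℂ, A⁻¹ * (A * X) = X := fun X => by
      rw [← Matrix.mul_assoc, hAi, Matrix.one_mul]
    have cA' : ∀ X : Matrix (Fin n) (Fin n) ℂ, A * (A⁻¹ * X) = X := fun X => by
      rw [← Matrix.mul_assoc, hAi', Matrix.one_mul]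
    have cB : ∀ X : Matrix (Fin n) (Fin n) ℂ, B⁻¹ * (B * X) = X := fun X => by
      rw [← Matrix.mul_assoc, hBi, Matrix.one_mul]
    have cB' : ∀ X : Matrix (Fin n) (Fin n) ℂ, B * (B⁻¹ * X) = X := fun X => by
      rw [← Matrix.mul_assoc, hBi', Matrix.one_mul]
    rw [cycX, cycZ, if_pos rfl, if_pos rfl, cycX, cycZ, if_neg h0m, if_neg h0m]
    have hinv : (t • (A⁻¹ * B) * A)⁻¹ = t⁻¹ • (A⁻¹ * (B⁻¹ * A)) := by
      refine Matrix.inv_eq_left_inv ?_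
      simp only [Matrix.smul_mul, Matrix.mul_smul, smul_smul]
      rw [mul_inv_cancel₀ htne, one_smul]  -- may need swap
      simp only [Matrix.mul_assoc, cA, cA', cB, cB']
      exact hAi
    have hL : (B * (A * (B⁻¹ * A⁻¹))) * (A * B * (A⁻¹ * B⁻¹)) = 1 := by
      simp only [Matrix.mul_assoc, cA, cA', cB, cB']
      exact hBi'
    have h1 : (1 : Matrix (Fin n) (Fin n) ℂ) + Vt * Wt = t • (B * (A * (B⁻¹ * A⁻¹))) := by
      calc (1 : Matrix (Fin n) (Fin n) ℂ) + Vt * Wt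
          = (B * (A * (B⁻¹ * A⁻¹))) * (A * B * (A⁻¹ * B⁻¹)) * (1 + Vt * Wt) := by
            rw [hL, Matrix.one_mul]
        _ = (B * (A * (B⁻¹ * A⁻¹))) * (A * B * A⁻¹ * B⁻¹ * (1 + Vt * Wt)) := by
            simp only [Matrix.mul_assoc]
        _ = t • (B * (A * (B⁻¹ * A⁻¹))) := by rw [hmom, Matrix.mul_smul, Matrix.mul_one]
    have h2 : (1 : Matrix (Fin n) (Fin n) ℂ) + A⁻¹ * B⁻¹ * Vt * (Wt * B * A)
        = A⁻¹ * (B⁻¹ * ((1 + Vt * Wt) * (B * A))) := by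
      rw [Matrix.add_mul, Matrix.one_mul, Matrix.mul_add, Matrix.mul_add]
      simp only [Matrix.mul_assoc, cB, hAi]
    rw [hinv, Matrix.mul_one, h2, h1]
    have hq0 : tpar q 0 = q 0 := by simp [tpar]
    simp only [Matrix.smul_mul, Matrix.mul_smul, smul_smul, Matrix.mul_assoc, cA, cA', cB,
      cB', hq0]
    rw [hAi, mul_comm (q 0) t⁻¹, ← mul_assoc, mul_inv_cancel₀ htne, one_mul]
end

section
/- Explicit inverse of the dual Ruijsenaars–Schneider Lax matrix: under the stated genericity assumptions, the n×n matrix A with entries A_{ij} = u_j·(t^{−1} − 1)/(t^{−1} − w_i w_j^{−1})·Π_{k≠j} (1 − t^{−1} w_j w_k^{−1})/(1 − w_j w_k^{−1}) is invertible, and its inverse has entries (A^{−1})_{ij} = u_i^{−1}·(t − 1)/(t − w_i w_j^{−1})·Π_{k≠j} (1 − t w_j w_k^{−1})/(1 − w_j w_k^{−1}). -/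
open Matrix Finset

/-- The dual Ruijsenaars–Schneider Lax matrix
`A_{ij} = u_j·(t⁻¹−1)/(t⁻¹ − w_i w_j⁻¹)·Π_{k≠j}(1 − t⁻¹ w_j w_k⁻¹)/(1 − w_j w_k⁻¹)`. -/
noncomputable def dualLax (n : ℕ) (t : ℂ) (w u : Fin n → ℂ) : Matrix (Fin n) (Fin n) ℂ :=
  Matrix.of fun i j =>
    u j * (t⁻¹ - 1) / (t⁻¹ - w i * (w j)⁻¹) *
      ∏ k ∈ Finset.univ \ {j}, (1 - t⁻¹ * w j * (w k)⁻¹) / (1 - w j * (w k)⁻¹)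

/-- The claimed explicit inverse
`(A⁻¹)_{ij} = u_i⁻¹·(t−1)/(t − w_i w_j⁻¹)·Π_{k≠j}(1 − t w_j w_k⁻¹)/(1 − w_j w_k⁻¹)`. -/
noncomputable def dualLaxInv (n : ℕ) (t : ℂ) (w u : Fin n → ℂ) : Matrix (Fin n) (Fin n) ℂ :=
  Matrix.of fun i j =>
    (u i)⁻¹ * (t - 1) / (t - w i * (w j)⁻¹) *
      ∏ k ∈ Finset.univ \ {j}, (1 - t * w j * (w k)⁻¹) / (1 - w j * (w k)⁻¹)

lemma key_lagrange (n : ℕ) (hn : 1 ≤ n) (t : ℂ) (w : Fin n → ℂ)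
    (hww : ∀ i j : Fin n, i ≠ j → w i ≠ w j) (i k : Fin n) :
    ∑ j : Fin n, (∏ m ∈ univ.erase i, (w j - t * w m)) *
        ∏ l ∈ univ.erase j, ((w j - w l)⁻¹ * (t * w k - w l))
      = ∏ m ∈ univ.erase i, (t * w k - t * w m) := by
  classical
  have hinj : Set.InjOn w (univ : Finset (Fin n)) := by
    intro a _ b _ hab
    by_contra h
    exact hww a b h hab
  set f : Polynomial ℂ := ∏ m ∈ univ.erase i, (Polynomial.X - Polynomial.C (t * w m)) with hf
  have hdeg : f.degree < (univ : Finset (Fin n)).card := by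
    rw [hf, Polynomial.degree_prod]
    simp only [Polynomial.degree_X_sub_C]
    rw [Finset.sum_const, card_erase_of_mem (mem_univ i), card_univ, Fintype.card_fin]
    rw [nsmul_eq_mul, mul_one]
    exact_mod_cast Nat.sub_lt hn Nat.one_pos
  have h := Lagrange.eq_interpolate hinj hdeg
  have h2 := congrArg (Polynomial.eval (t * w k)) h
  rw [Lagrange.interpolate_apply] at h2
  simp only [Polynomial.eval_finset_sum, Polynomial.eval_mul, Polynomial.eval_C,
    Lagrange.basis, Lagrange.basisDivisor, Polynomial.eval_prod, Polynomial.eval_sub,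
    Polynomial.eval_X, hf] at h2
  exact h2.symm

/-- `A` is invertible with the stated explicit inverse. -/
theorem dualLax_inverse (n : ℕ) (hn : 1 ≤ n) (t : ℂ) (ht : t ≠ 0)
    (w u : Fin n → ℂ) (hw : ∀ i, w i ≠ 0) (hu : ∀ i, u i ≠ 0)
    (hww : ∀ i j, i ≠ j → w i ≠ w j) (htw : ∀ i j, w i ≠ t * w j) :
    IsUnit (dualLax n t w u) ∧ (dualLax n t w u)⁻¹ = dualLaxInv n t w u := by
  classical
  have hsd : ∀ j : Fin n, (univ : Finset (Fin n)) \ {j} = univ.erase j := by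
    intro j; ext m; simp [Finset.mem_erase, and_comm]
  have hC : ∀ k : Fin n, (∏ l ∈ univ.erase k, (w k - w l)) ≠ 0 := by
    intro k
    refine Finset.prod_ne_zero_iff.mpr fun l hl => ?_
    exact sub_ne_zero.mpr (hww k l (Ne.symm (Finset.mem_erase.mp hl).1))
  have hA : ∀ i j : Fin n, dualLax n t w u i j
      = u j * ((1 - t) * w j / (w j - t * w i)) * (t⁻¹) ^ (n - 1) *
        ((∏ m ∈ univ.erase j, (w j - t * w m)) / (∏ m ∈ univ.erase j, (w j - w m))) := by
    intro i j
    have ha : w j - t * w i ≠ 0 := sub_ne_zero.mpr (htw j i)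
    have hp : ∏ m ∈ univ.erase j, (1 - t⁻¹ * w j * (w m)⁻¹) / (1 - w j * (w m)⁻¹)
        = (t⁻¹) ^ (n - 1) *
          ((∏ m ∈ univ.erase j, (w j - t * w m)) / (∏ m ∈ univ.erase j, (w j - w m))) := by
      calc ∏ m ∈ univ.erase j, (1 - t⁻¹ * w j * (w m)⁻¹) / (1 - w j * (w m)⁻¹)
          = ∏ m ∈ univ.erase j, t⁻¹ * ((w j - t * w m) / (w j - w m)) := by
            refine Finset.prod_congr rfl fun m hm => ?_
            have hm' : m ≠ j := (Finset.mem_erase.mp hm).1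
            have h1 : w m ≠ 0 := hw m
            have h2 : w j - w m ≠ 0 := sub_ne_zero.mpr (hww j m (Ne.symm hm'))
            have h2' : w m - w j ≠ 0 := sub_ne_zero.mpr (hww m j hm')
            have h3 : 1 - w j * (w m)⁻¹ ≠ 0 := by
              have he : 1 - w j * (w m)⁻¹ = (w m - w j) / w m := by
                rw [eq_div_iff h1]; field_simp
              rw [he]
              exact div_ne_zero h2' h1
            field_simp [h1, h2, h2', h3, ht]
            ring
        _ = (t⁻¹) ^ (n - 1) *
            ((∏ m ∈ univ.erase j, (w j - t * w m)) / (∏ m ∈ univ.erase j, (w j - w m))) := by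
            rw [Finset.prod_mul_distrib, Finset.prod_const,
              Finset.card_erase_of_mem (mem_univ j), Finset.card_univ, Fintype.card_fin,
              Finset.prod_div_distrib]
    have hd : t⁻¹ - w i * (w j)⁻¹ ≠ 0 := by
      have he : t⁻¹ - w i * (w j)⁻¹ = (w j - t * w i) / (t * w j) := by
        rw [eq_div_iff (mul_ne_zero ht (hw j))]
        field_simp [ht, hw j]
      rw [he]
      exact div_ne_zero ha (mul_ne_zero ht (hw j))
    have hq : u j * (t⁻¹ - 1) / (t⁻¹ - w i * (w j)⁻¹)
        = u j * ((1 - t) * w j / (w j - t * w i)) := by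
      rw [div_eq_iff hd]
      field_simp [ha, hw j, ht]
    simp only [dualLax, Matrix.of_apply]
    rw [hsd j, hp, hq]
    ring
  have hB : ∀ j k : Fin n, dualLaxInv n t w u j k
      = (u j)⁻¹ * ((t - 1) * w k / (t * w k - w j)) *
        ((∏ l ∈ univ.erase k, (t * w k - w l)) / (∏ l ∈ univ.erase k, (w k - w l))) := by
    intro j k
    have hb : t * w k - w j ≠ 0 := sub_ne_zero.mpr (Ne.symm (htw j k))
    have hp : ∏ l ∈ univ.erase k, (1 - t * w k * (w l)⁻¹) / (1 - w k * (w l)⁻¹)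
        = (∏ l ∈ univ.erase k, (t * w k - w l)) / (∏ l ∈ univ.erase k, (w k - w l)) := by
      rw [← Finset.prod_div_distrib]
      refine Finset.prod_congr rfl fun l hl => ?_
      have hl' : l ≠ k := (Finset.mem_erase.mp hl).1
      have h1 : w l ≠ 0 := hw l
      have h2 : w k - w l ≠ 0 := sub_ne_zero.mpr (hww k l (Ne.symm hl'))
      have h2' : w l - w k ≠ 0 := sub_ne_zero.mpr (hww l k hl')
      have h3 : 1 - w k * (w l)⁻¹ ≠ 0 := by
        have he : 1 - w k * (w l)⁻¹ = (w l - w k) / w l := by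
          rw [eq_div_iff h1]; field_simp
        rw [he]
        exact div_ne_zero h2' h1
      field_simp [h1, h2, h2', h3]
      ring
    have hd : t - w j * (w k)⁻¹ ≠ 0 := by
      have he : t - w j * (w k)⁻¹ = (t * w k - w j) / w k := by
        rw [eq_div_iff (hw k)]
        field_simp [hw k]
      rw [he]
      exact div_ne_zero hb (hw k)
    have hcore : (t - 1) / (t - w j * (w k)⁻¹) = (t - 1) * w k / (t * w k - w j) := by
      rw [div_eq_div_iff hd hb]
      field_simp [hw k]
    have hq : (u j)⁻¹ * (t - 1) / (t - w j * (w k)⁻¹)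
        = (u j)⁻¹ * ((t - 1) * w k / (t * w k - w j)) := by
      rw [mul_div_assoc, hcore, mul_div_assoc]
    simp only [dualLaxInv, Matrix.of_apply]
    rw [hsd k, hp, hq]
  have hterm : ∀ i k j : Fin n, dualLax n t w u i j * dualLaxInv n t w u j k
      = (t⁻¹) ^ (n - 1) * (∏ l ∈ univ.erase k, (w k - w l))⁻¹ *
        ((∏ m ∈ univ.erase i, (w j - t * w m)) *
          ∏ l ∈ univ.erase j, ((w j - w l)⁻¹ * (t * w k - w l))) := by
    intro i k j
    rw [hA i j, hB j k]
    have ha : w j - t * w i ≠ 0 := sub_ne_zero.mpr (htw j i)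
    have hb : t * w k - w j ≠ 0 := sub_ne_zero.mpr (Ne.symm (htw j k))
    rw [Finset.prod_mul_distrib, Finset.prod_inv_distrib]
    have h1 : (w j - t * w i) * ∏ m ∈ univ.erase i, (w j - t * w m)
        = (w j - t * w j) * ∏ m ∈ univ.erase j, (w j - t * w m) := by
      rw [Finset.mul_prod_erase univ (fun m => w j - t * w m) (mem_univ i),
        Finset.mul_prod_erase univ (fun m => w j - t * w m) (mem_univ j)]
    have h2 : (t * w k - w j) * ∏ l ∈ univ.erase j, (t * w k - w l)
        = (t * w k - w k) * ∏ l ∈ univ.erase k, (t * w k - w l) := by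
      rw [Finset.mul_prod_erase univ (fun l => t * w k - w l) (mem_univ j),
        Finset.mul_prod_erase univ (fun l => t * w k - w l) (mem_univ k)]
    set PN := ∏ m ∈ univ.erase j, (w j - t * w m) with hPN
    set PD := ∏ m ∈ univ.erase j, (w j - w m) with hPD
    set PG := ∏ l ∈ univ.erase k, (t * w k - w l) with hPG
    set PC := ∏ l ∈ univ.erase k, (w k - w l) with hPC
    set PF := ∏ m ∈ univ.erase i, (w j - t * w m) with hPF
    set PH := ∏ l ∈ univ.erase j, (t * w k - w l) with hPH
    have hDj : PD ≠ 0 := hC j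
    have hCk : PC ≠ 0 := hC k
    have hFi : PF = (w j - t * w j) * PN / (w j - t * w i) := by
      rw [eq_div_iff ha]
      linear_combination h1
    have hHj : PH = (t * w k - w k) * PG / (t * w k - w j) := by
      rw [eq_div_iff hb]
      linear_combination h2
    rw [hFi, hHj]
    field_simp [hu j, ha, hb, hDj, hCk, ht]
  have hmul : dualLax n t w u * dualLaxInv n t w u = 1 := by
    ext i k
    rw [Matrix.mul_apply]
    rw [Finset.sum_congr rfl fun j _ => hterm i k j, ← Finset.mul_sum,
      key_lagrange n hn t w hww i k]
    rcases eq_or_ne i k with rfl | hik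
    · rw [Matrix.one_apply_eq]
      have hpr : ∏ m ∈ univ.erase i, (t * w i - t * w m)
          = t ^ (n - 1) * ∏ m ∈ univ.erase i, (w i - w m) := by
        calc ∏ m ∈ univ.erase i, (t * w i - t * w m)
            = ∏ m ∈ univ.erase i, t * (w i - w m) :=
              Finset.prod_congr rfl fun m _ => by ring
          _ = t ^ (n - 1) * ∏ m ∈ univ.erase i, (w i - w m) := by
              rw [Finset.prod_mul_distrib, Finset.prod_const,
                Finset.card_erase_of_mem (mem_univ i), Finset.card_univ, Fintype.card_fin]
      rw [hpr, inv_pow]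
      field_simp [hC i]
    · rw [Matrix.one_apply_ne hik]
      have hz : ∏ m ∈ univ.erase i, (t * w k - t * w m) = 0 :=
        Finset.prod_eq_zero (Finset.mem_erase.mpr ⟨Ne.symm hik, mem_univ k⟩) (by ring)
      rw [hz]
      ring
  have hmul' : dualLaxInv n t w u * dualLax n t w u = 1 := mul_eq_one_comm.mp hmul
  exact ⟨⟨⟨_, _, hmul, hmul'⟩, rfl⟩, Matrix.inv_eq_right_inv hmul⟩
end

section
/- Explicit formula for the generalised Ruijsenaars–Schneider Hamiltonian G_{m,1}: under the stated genericity assumptions, for every integer m ≥ 1, tr(A^{−1}·B^m) = Σ σ_{j₀}⋯σ_{j_{m−1}} · x_{j₀}^{−1} · Π_{s=0}^{m−1} (t−1)/(t − x_{j_s} x_{j_{s+1}}^{−1}) · Π_{s=0}^{m−1} Π_{a≠j_s} Υ_{j_s a}, where the sum is over all tuples (j₀,…,j_{m−1}) with 1 ≤ j_s ≤ n, indices are read cyclically (j_m := j₀), and Υ_{i a} = (1 − t x_i x_a^{−1})/(1 − x_i x_a^{−1}). -/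
open Matrix Finset

/-- The Ruijsenaars–Schneider Lax matrix in the coordinates `(x, σ)`:
`B_{ij} = σ_j·(t−1)/(t − x_i x_j⁻¹)·Π_{k≠j}(1 − t x_j x_k⁻¹)/(1 − x_j x_k⁻¹)`. -/
noncomputable def BLax (n : ℕ) (t : ℂ) (x σ : Fin n → ℂ) : Matrix (Fin n) (Fin n) ℂ :=
  Matrix.of fun i j =>
    σ j * (t - 1) / (t - x i * (x j)⁻¹) *
      ∏ k ∈ Finset.univ \ {j}, (1 - t * x j * (x k)⁻¹) / (1 - x j * (x k)⁻¹)

/-- `Υ_{ia} = (1 − t x_i x_a⁻¹)/(1 − x_i x_a⁻¹)`. -/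
noncomputable def Ups (n : ℕ) (t : ℂ) (x : Fin n → ℂ) (i a : Fin n) : ℂ :=
  (1 - t * x i * (x a)⁻¹) / (1 - x i * (x a)⁻¹)

/-- Auxiliary: a path of length `m+1` starting at `i`. -/
def RSaux.pth {n m : ℕ} (i : Fin n) (p : Fin m → Fin n) : Fin (m+1) → Fin n := Fin.cons i p

open RSaux in
lemma RSaux.pow_mulVec_eq {n : ℕ} (B : Matrix (Fin n) (Fin n) ℂ) :
    ∀ (m : ℕ) (v : Fin n → ℂ) (i : Fin n),
      ((B ^ m) *ᵥ v) i =
        ∑ p : Fin m → Fin n,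
          (∏ s : Fin m, B (pth i p s.castSucc) (pth i p s.succ)) *
            v (pth i p (Fin.last m)) := by
  intro m
  induction m with
  | zero =>
    intro v i
    simp [Fintype.sum_unique, pth]
  | succ m ih =>
    intro v i
    rw [pow_succ', ← Matrix.mulVec_mulVec, Matrix.mulVec]
    simp only [dotProduct]
    simp_rw [fun a => ih v a]
    simp_rw [Finset.mul_sum]
    apply Eq.symm
    rw [← Equiv.sum_comp (Fin.consEquiv fun _ : Fin (m+1) => Fin n)
      (fun q => (∏ s : Fin (m+1), B (pth i q s.castSucc) (pth i q s.succ)) * v (pth i q (Fin.last (m+1))))]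
    rw [Fintype.sum_prod_type]
    refine Finset.sum_congr rfl fun a _ => Finset.sum_congr rfl fun p _ => ?_
    show (∏ s : Fin (m+1), B (pth i (Fin.cons a p) s.castSucc) (pth i (Fin.cons a p) s.succ)) * v (pth i (Fin.cons a p) (Fin.last (m+1)))
      = B i a * ((∏ s : Fin m, B (pth a p s.castSucc) (pth a p s.succ)) * v (pth a p (Fin.last m)))
    have hq : ∀ s : Fin (m+1), pth i (Fin.cons a p) s.succ = pth a p s := by
      intro s; simp [pth]
    have hlast : pth i (Fin.cons a p) (Fin.last (m+1)) = pth a p (Fin.last m) := by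
      rw [← Fin.succ_last]; exact hq _
    rw [Fin.prod_univ_succ, hlast]
    have h0 : B (pth i (Fin.cons a p) (0 : Fin (m+1)).castSucc) (pth i (Fin.cons a p) (0 : Fin (m+1)).succ) = B i a := by
      rw [hq 0]; simp [pth]
    have hs : ∀ s : Fin m, B (pth i (Fin.cons a p) s.succ.castSucc) (pth i (Fin.cons a p) s.succ.succ)
        = B (pth a p s.castSucc) (pth a p s.succ) := by
      intro s
      rw [← Fin.succ_castSucc, hq, hq]
    simp_rw [hs, h0]
    ring

open RSaux in
lemma RSaux.trace_diag_pow {n m' : ℕ} (d : Fin n → ℂ) (B : Matrix (Fin n) (Fin n) ℂ) :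
    Matrix.trace (Matrix.diagonal d * B ^ (m'+1)) =
      ∑ j : Fin (m'+1) → Fin n, d (j 0) * ∏ s : Fin (m'+1), B (j s) (j (s+1)) := by
  have hlast : ∀ (i : Fin n) (p : Fin (m'+1) → Fin n),
      pth i p (Fin.last (m'+1)) = p (Fin.last m') :=
    fun i p => @Fin.cons_succ (m'+1) (fun _ => Fin n) i p (Fin.last m')
  have htr : Matrix.trace (Matrix.diagonal d * B ^ (m'+1)) =
      ∑ i, d i * (B ^ (m'+1)) i i := by
    simp [Matrix.trace, Matrix.diag, Matrix.diagonal_mul]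
  have key : ∀ i : Fin n, d i * (B ^ (m'+1)) i i =
      ∑ p : Fin (m'+1) → Fin n,
        d i * ((∏ s : Fin (m'+1), B (pth i p s.castSucc) (pth i p s.succ)) *
          (if p (Fin.last m') = i then (1:ℂ) else 0)) := by
    intro i
    have hdiag : (B ^ (m'+1)) i i = ((B ^ (m'+1)) *ᵥ Pi.single i 1) i := by
      rw [Matrix.mulVec_single]; simp
    rw [hdiag, pow_mulVec_eq, Finset.mul_sum]
    refine Finset.sum_congr rfl fun p _ => ?_
    rw [hlast, Pi.single_apply]
  rw [htr]
  simp_rw [key]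
  rw [Finset.sum_comm]
  have hswap : ∀ p : Fin (m'+1) → Fin n,
      (∑ i, d i * ((∏ s : Fin (m'+1), B (pth i p s.castSucc) (pth i p s.succ)) *
        (if p (Fin.last m') = i then (1:ℂ) else 0)))
      = d (p (Fin.last m')) * ∏ s : Fin (m'+1), B (pth (p (Fin.last m')) p s.castSucc) (pth (p (Fin.last m')) p s.succ) := by
    intro p
    rw [Finset.sum_eq_single (p (Fin.last m'))]
    · simp
    · intro b _ hb
      simp [Ne.symm hb]
    · simp
  simp_rw [hswap]
  -- reindex `p ↦ j` with `j s = p (s - 1)`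
  rw [← Equiv.sum_comp (Equiv.arrowCongr (Equiv.addRight (1 : Fin (m'+1))) (Equiv.refl (Fin n)))
    (fun j : Fin (m'+1) → Fin n => d (j 0) * ∏ s : Fin (m'+1), B (j s) (j (s+1)))]
  refine Finset.sum_congr rfl fun p _ => ?_
  have h01 : (0 : Fin (m'+1)) - 1 = Fin.last m' := by
    exact (eq_sub_of_add_eq (Fin.last_add_one m')).symm
  have hE : ∀ s : Fin (m'+1), (Equiv.arrowCongr (Equiv.addRight 1) (Equiv.refl (Fin n))) p s = p (s - 1) := by
    intro s; simp [Equiv.arrowCongr_apply, Function.comp, sub_eq_add_neg]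
  simp_rw [hE, h01, add_sub_cancel_right]
  have hsucc : ∀ s : Fin (m'+1), pth (p (Fin.last m')) p s.succ = p s :=
    fun s => @Fin.cons_succ (m'+1) (fun _ => Fin n) (p (Fin.last m')) p s
  have hcast : ∀ s : Fin (m'+1), pth (p (Fin.last m')) p s.castSucc = p (s - 1) := by
    intro s
    induction s using Fin.cases with
    | zero => rw [h01]; rfl
    | succ r =>
      have h2 : r.succ.castSucc = r.castSucc.succ := Fin.succ_castSucc r
      have h1 : r.succ - 1 = r.castSucc := by
        have := @Fin.coeSucc_eq_succ m' r
        rw [← this]; exact add_sub_cancel_right _ 1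
      rw [h2, hsucc, h1]
  simp_rw [hcast, hsucc]

/-- explicit formula for the generalised Ruijsenaars–Schneider Hamiltonian
`G_{m,1} = tr(A⁻¹ B^m)`, as a sum over tuples `(j₀,…,j_{m−1})` read cyclically. -/
theorem trace_Ainv_Bm_formula (n : ℕ) (hn : 1 ≤ n) (t : ℂ) (ht : t ≠ 0)
    (x σ : Fin n → ℂ) (hx : ∀ i, x i ≠ 0)
    (hxx : ∀ i j, i ≠ j → x i ≠ x j) (htx : ∀ i j, x i ≠ t * x j)
    (m : ℕ) [NeZero m] (hm : 1 ≤ m) :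
    Matrix.trace ((Matrix.diagonal x)⁻¹ * BLax n t x σ ^ m) =
      ∑ j : Fin m → Fin n,
        (∏ s : Fin m, σ (j s)) * (x (j 0))⁻¹ *
          (∏ s : Fin m, (t - 1) / (t - x (j s) * (x (j (s + 1)))⁻¹)) *
          ∏ s : Fin m, ∏ a ∈ Finset.univ \ {j s}, Ups n t x (j s) a := by
  obtain ⟨m', rfl⟩ : ∃ m', m = m' + 1 := ⟨m - 1, by omega⟩
  have hinv : (Matrix.diagonal x)⁻¹ = Matrix.diagonal (fun i => (x i)⁻¹) := by
    apply Matrix.inv_eq_left_inv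
    rw [Matrix.diagonal_mul_diagonal]
    have h : (fun i => (x i)⁻¹ * x i) = fun _ => (1:ℂ) := funext fun i => inv_mul_cancel₀ (hx i)
    rw [h, Matrix.diagonal_one]
  rw [hinv, RSaux.trace_diag_pow]
  refine Finset.sum_congr rfl fun j _ => ?_
  have hB : ∀ i k : Fin n, BLax n t x σ i k =
      σ k * ((t - 1) / (t - x i * (x k)⁻¹)) * ∏ a ∈ Finset.univ \ {k}, Ups n t x k a := by
    intro i k
    simp [BLax, Ups, mul_div_assoc]
  simp_rw [hB]
  rw [Finset.prod_mul_distrib, Finset.prod_mul_distrib]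
  have hshift : ∀ f : Fin n → ℂ,
      (∏ s : Fin (m'+1), f (j (s + 1))) = ∏ s : Fin (m'+1), f (j s) := by
    intro f
    exact Equiv.prod_comp (Equiv.addRight (1 : Fin (m'+1))) (fun s => f (j s))
  rw [hshift σ, hshift (fun i => ∏ a ∈ Finset.univ \ {i}, Ups n t x i a)]
  ring
end

section
/- The key trace identity in the proof that the cyclic-quiver Calogero–Moser space is Poisson-isomorphic to the tadpole one: let m ≥ 2, let t₀,…,t_{m−1} be complex numbers extended m-periodically (t_{i+m} = t_i), and set τ = Σ_{i=0}^{m−1} t_i. Let A, B be n×n complex matrices and let 0 ≤ β < γ be integers. For an integer r write r = p·m + j with 0 ≤ j ≤ m−1, and for 0 ≤ i ≤ m−1 set ε(i,j) = 1 if i + j ≥ m and ε(i,j) = 0 otherwise. Then Σ_{r=βm}^{γm−1} Σ_{i=0}^{m−1} t_i·t_{i+j} · tr(B·A^{p+ε(i,j)}·B·A^{β+γ−p−ε(i,j)}) = τ² · Σ_{p=β}^{γ−1} tr(B·A^{p}·B·A^{β+γ−p}). -/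
open Matrix Finset

private lemma sum_Ico_mul_reindex (f : ℕ → ℂ) (β γ m : ℕ) (hm : 0 < m) :
    ∑ r ∈ Finset.Ico (β * m) (γ * m), f r
      = ∑ p ∈ Finset.Ico β γ, ∑ j ∈ Finset.range m, f (j + p * m) := by
  rw [← Finset.sum_product']
  refine Finset.sum_nbij' (fun r => (r / m, r % m)) (fun x => x.2 + x.1 * m) ?_ ?_ ?_ ?_ ?_
  · intro r hr
    simp only [Finset.mem_Ico, Finset.mem_product, Finset.mem_range] at *
    exact ⟨⟨(Nat.le_div_iff_mul_le hm).2 hr.1, (Nat.div_lt_iff_lt_mul hm).2 hr.2⟩,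
      Nat.mod_lt _ hm⟩
  · rintro ⟨p, j⟩ hx
    simp only [Finset.mem_Ico, Finset.mem_product, Finset.mem_range] at *
    constructor
    · calc β * m ≤ p * m := Nat.mul_le_mul_right m hx.1.1
        _ ≤ j + p * m := Nat.le_add_left _ _
    · calc j + p * m < m + p * m := by omega
        _ = (p + 1) * m := by ring
        _ ≤ γ * m := Nat.mul_le_mul_right m hx.1.2
  · intro r hr
    exact Nat.mod_add_div' r m
  · rintro ⟨p, j⟩ hx
    simp only [Finset.mem_Ico, Finset.mem_product, Finset.mem_range] at hx
    simp [Nat.add_mul_div_right _ _ hm, Nat.div_eq_of_lt hx.2, Nat.add_mul_mod_self_right,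
      Nat.mod_eq_of_lt hx.2]
  · intro r hr
    exact congrArg f (Nat.mod_add_div' r m).symm

private lemma shift_sum (f : ℕ → ℂ) (β γ : ℕ) (h : β < γ) (hf : f γ = f β) :
    ∑ p ∈ Finset.Ico β γ, f (p + 1) = ∑ p ∈ Finset.Ico β γ, f p := by
  rw [Finset.sum_Ico_eq_sum_range, Finset.sum_Ico_eq_sum_range]
  obtain ⟨M, hM⟩ : ∃ M, γ - β = M + 1 := ⟨γ - β - 1, by omega⟩
  rw [hM, Finset.sum_range_succ, Finset.sum_range_succ']
  have h1 : β + M + 1 = γ := by omega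
  rw [h1, hf]
  have h2 : ∀ i, β + (i + 1) = β + i + 1 := fun i => by ring
  simp only [h2, Nat.add_zero]

private lemma core_sum (S0 S1 : ℂ) (f : ℕ → ℂ) (β γ : ℕ) (h : β < γ) (hf : f γ = f β) :
    ∑ p ∈ Finset.Ico β γ, (S0 * f p + S1 * f (p + 1))
      = (S0 + S1) * ∑ p ∈ Finset.Ico β γ, f p := by
  rw [Finset.sum_add_distrib, ← Finset.mul_sum, ← Finset.mul_sum, shift_sum f β γ h hf]
  ring

noncomputable def trF (n : ℕ) (A B : Matrix (Fin n) (Fin n) ℂ) (β γ p : ℕ) : ℂ :=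
  Matrix.trace (B * A ^ p * B * A ^ (β + γ - p))


/-- `ε(i,j) = 1` if `i + j ≥ m`, and `0` otherwise. -/
def epsShift (m i j : ℕ) : ℕ := if m ≤ i + j then 1 else 0

/-- the key trace identity in the proof that the cyclic-quiver Calogero–Moser
space is Poisson-isomorphic to the tadpole one.  Here `p = ⌊r/m⌋` and `j = r mod m`, and the
`m`-periodic parameters satisfy `t_{i+m} = t_i` with `τ = Σ_{i=0}^{m−1} t_i`. -/
theorem cyclic_trace_sum_identity (n m : ℕ) (hm : 2 ≤ m)
    (t : ℕ → ℂ) (hper : ∀ i, t (i + m) = t i)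
    (A B : Matrix (Fin n) (Fin n) ℂ) (β γ : ℕ) (hβγ : β < γ) :
    ∑ r ∈ Finset.Ico (β * m) (γ * m), ∑ i ∈ Finset.range m,
        t i * t (i + r % m) *
          Matrix.trace (B * A ^ (r / m + epsShift m i (r % m)) * B *
            A ^ (β + γ - r / m - epsShift m i (r % m))) =
      (∑ i ∈ Finset.range m, t i) ^ 2 *
        ∑ p ∈ Finset.Ico β γ, Matrix.trace (B * A ^ p * B * A ^ (β + γ - p)) := by
  have hm0 : 0 < m := by omega
  -- shifted sums of the periodic sequence
  have hshift : ∀ k, (∑ i ∈ Finset.range m, t (k + 1 + i)) = ∑ i ∈ Finset.range m, t (k + i) := by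
    intro k
    obtain ⟨M, rfl⟩ : ∃ M, m = M + 1 := ⟨m - 1, by omega⟩
    rw [Finset.sum_range_succ, Finset.sum_range_succ' (fun i => t (k + i))]
    have h1 : k + 1 + M = k + (M + 1) := by ring
    have h2 : ∑ i ∈ Finset.range M, t (k + 1 + i) = ∑ i ∈ Finset.range M, t (k + (i + 1)) :=
      Finset.sum_congr rfl fun i _ => congrArg t (by omega)
    rw [h1, hper k, h2]
    norm_num
  have hτ : ∀ k : ℕ, (∑ i ∈ Finset.range m, t (k + i)) = ∑ i ∈ Finset.range m, t i := by
    intro k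
    induction k with
    | zero => simp
    | succ k ih => rw [← ih, hshift k]
  -- cyclicity of the trace
  have hFcyc : trF n A B β γ γ = trF n A B β γ β := by
    unfold trF
    rw [Nat.add_sub_cancel, Nat.add_sub_cancel_left, mul_assoc, Matrix.trace_mul_comm,
      ← mul_assoc]
  -- the two coefficient sums
  set S0 : ℂ := ∑ j ∈ Finset.range m, ∑ i ∈ Finset.range m,
      (if m ≤ i + j then 0 else t i * t (i + j)) with hS0
  set S1 : ℂ := ∑ j ∈ Finset.range m, ∑ i ∈ Finset.range m,
      (if m ≤ i + j then t i * t (i + j) else 0) with hS1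
  have hS : S0 + S1 = (∑ i ∈ Finset.range m, t i) ^ 2 := by
    rw [hS0, hS1, ← Finset.sum_add_distrib]
    have : ∀ j ∈ Finset.range m, (∑ i ∈ Finset.range m,
        (if m ≤ i + j then 0 else t i * t (i + j)))
        + ∑ i ∈ Finset.range m, (if m ≤ i + j then t i * t (i + j) else 0)
        = ∑ i ∈ Finset.range m, t i * t (i + j) := by
      intro j _
      rw [← Finset.sum_add_distrib]
      refine Finset.sum_congr rfl fun i _ => ?_
      by_cases hc : m ≤ i + j <;> simp [hc]
    rw [Finset.sum_congr rfl this, Finset.sum_comm]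
    have : ∀ i ∈ Finset.range m, (∑ j ∈ Finset.range m, t i * t (i + j))
        = t i * ∑ j ∈ Finset.range m, t j := by
      intro i _
      rw [← Finset.mul_sum, hτ i]
    rw [Finset.sum_congr rfl this, ← Finset.sum_mul, sq]
  -- main computation
  calc ∑ r ∈ Finset.Ico (β * m) (γ * m), ∑ i ∈ Finset.range m,
        t i * t (i + r % m) *
          Matrix.trace (B * A ^ (r / m + epsShift m i (r % m)) * B *
            A ^ (β + γ - r / m - epsShift m i (r % m)))
      = ∑ p ∈ Finset.Ico β γ, ∑ j ∈ Finset.range m, ∑ i ∈ Finset.range m,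
          ((if m ≤ i + j then 0 else t i * t (i + j)) * trF n A B β γ p
            + (if m ≤ i + j then t i * t (i + j) else 0) * trF n A B β γ (p + 1)) := by
        rw [sum_Ico_mul_reindex _ _ _ _ hm0]
        refine Finset.sum_congr rfl fun p hp => Finset.sum_congr rfl fun j hj =>
          Finset.sum_congr rfl fun i hi => ?_
        simp only [Finset.mem_Ico, Finset.mem_range] at hp hj hi
        rw [Nat.add_mul_div_right _ _ hm0, Nat.div_eq_of_lt hj,
          Nat.add_mul_mod_self_right, Nat.mod_eq_of_lt hj]
        simp only [Nat.zero_add, Nat.add_zero]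
        unfold epsShift trF
        by_cases hc : m ≤ i + j
        · simp only [if_pos hc]
          have he : β + γ - p - 1 = β + γ - (p + 1) := by omega
          rw [he]; ring
        · simp only [if_neg hc]
          have he : β + γ - p - 0 = β + γ - p := by omega
          rw [he, Nat.add_zero]; ring
    _ = ∑ p ∈ Finset.Ico β γ, (S0 * trF n A B β γ p + S1 * trF n A B β γ (p + 1)) := by
        refine Finset.sum_congr rfl fun p _ => ?_
        rw [hS0, hS1]
        simp only [Finset.sum_add_distrib, ← Finset.sum_mul]
    _ = (S0 + S1) * ∑ p ∈ Finset.Ico β γ, trF n A B β γ p :=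
        core_sum S0 S1 (trF n A B β γ) β γ hβγ hFcyc
    _ = (∑ i ∈ Finset.range m, t i) ^ 2 *
        ∑ p ∈ Finset.Ico β γ, Matrix.trace (B * A ^ p * B * A ^ (β + γ - p)) := by
        rw [hS]; rfl
end
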